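/- arXiv:1410.7044 — 6 statements merged into one kernel-verified Lean document; each statement's English description precedes it below -/
import Mathlib

section
/- Let T be a tournament on n vertices, and let σ = (S_1,S_2,S_3) be a triple of pairwise disjoint vertex subsets with |S_1|,|S_2|,|S_3| ≥ c·n for some c > 0. Fix distinct i,j ∈ {1,2,3} and set l = 6-i-j. Then σ is an (i,j)-triple, or σ is an (i,l)-triple, or there exist disjoint subsets A, B ⊆ V(T) with |A|, |B| ≥ (c/2)·n such that A is complete to B. -/
/-- A tournament: an irreflexive relation such that for distinct vertices exactly one
direction is an edge. -/
def IsTournament {V : Type*} (E : V → V → Prop) : Prop :=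
  (∀ v, ¬ E v v) ∧ ∀ u v : V, u ≠ v → (E u v ↔ ¬ E v u)

/-- For `v ∈ S i` and `j ≠ i`, the set `N^σ(v,j)`: vertices of `S j` joined to `v`
by a "backward" edge relative to the order of the indices. -/
def Nbhd {V : Type*} [DecidableEq V] (E : V → V → Prop) [DecidableRel E]
    (S : Fin 3 → Finset V) (i j : Fin 3) (v : V) : Finset V :=
  if i < j then (S j).filter (fun w => E w v) else (S j).filter (fun w => E v w)

/-- `σ = (S 0, S 1, S 2)` is an `(i,j)`-triple: there is an ordering (a duplicate-free
list) `v_1, ..., v_{|S i|}` of `S i` such that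
`min {k : |N(v_1,j) ∪ ... ∪ N(v_k,j)| ≥ |S j|/2} ≥ min {k : |N(v_1,l) ∪ ... ∪ N(v_k,l)| ≥ |S l|/2}`
where `l` is the remaining index, and both minima exist. -/
def IsIJTriple {V : Type*} [DecidableEq V] (E : V → V → Prop) [DecidableRel E]
    (S : Fin 3 → Finset V) (i j : Fin 3) : Prop :=
  ∃ L : List V, L.Nodup ∧ L.toFinset = S i ∧
    (let A : Set ℕ :=
      {k | (S j).card ≤ 2 * (((L.take k).toFinset).biUnion (Nbhd E S i j)).card};
    let B : Set ℕ :=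
      {k | (S (-(i + j))).card ≤
        2 * (((L.take k).toFinset).biUnion (Nbhd E S i (-(i + j)))).card};
    A.Nonempty ∧ B.Nonempty ∧ sInf B ≤ sInf A)

/-- `A` is complete to `B`: every vertex of `A` has an edge directed to every vertex of `B`. -/
def CompleteTo {V : Type*} (E : V → V → Prop) (A B : Finset V) : Prop :=
  ∀ a ∈ A, ∀ b ∈ B, E a b

lemma helper7 {V : Type*} [Fintype V] [DecidableEq V] (E : V → V → Prop)
    [DecidableRel E] (hT : IsTournament E) (S : Fin 3 → Finset V)
    (i k : Fin 3) (hdisj : Disjoint (S i) (S k))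
    (c : ℝ) (hc : 0 < c)
    (hsi : c * (Fintype.card V : ℝ) ≤ ((S i).card : ℝ))
    (hsk : c * (Fintype.card V : ℝ) ≤ ((S k).card : ℝ))
    (h : ¬ (S k).card ≤ 2 * ((S i).biUnion (Nbhd E S i k)).card) :
    ∃ A B : Finset V, Disjoint A B ∧ c / 2 * (Fintype.card V : ℝ) ≤ (A.card : ℝ) ∧
      c / 2 * (Fintype.card V : ℝ) ≤ (B.card : ℝ) ∧ CompleteTo E A B := by
  push_neg at h
  set U := (S i).biUnion (Nbhd E S i k) with hU
  have hUsub : U ⊆ S k := by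
    refine Finset.biUnion_subset.2 fun v _ => ?_
    unfold Nbhd
    split <;> exact Finset.filter_subset _ _
  set B0 := S k \ U with hB0def
  have hcardsd : B0.card = (S k).card - U.card := Finset.card_sdiff_of_subset hUsub
  have hUle : U.card ≤ (S k).card := Finset.card_le_card hUsub
  have hB0 : (S k).card ≤ 2 * B0.card := by omega
  have hn : (0:ℝ) ≤ (Fintype.card V : ℝ) := by positivity
  have hB0r : c / 2 * (Fintype.card V : ℝ) ≤ (B0.card : ℝ) := by
    have h2 : ((S k).card : ℝ) ≤ 2 * (B0.card : ℝ) := by exact_mod_cast hB0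
    nlinarith
  have hAir : c / 2 * (Fintype.card V : ℝ) ≤ ((S i).card : ℝ) := by nlinarith
  have hdisj' : Disjoint (S i) B0 := hdisj.mono_right (Finset.sdiff_subset)
  by_cases hlt : i < k
  · refine ⟨S i, B0, hdisj', hAir, hB0r, ?_⟩
    intro a ha b hb
    have hbk : b ∈ S k := (Finset.mem_sdiff.1 hb).1
    have hbU : b ∉ U := (Finset.mem_sdiff.1 hb).2
    have hnba : ¬ E b a := by
      intro hE
      exact hbU (Finset.mem_biUnion.2 ⟨a, ha, by
        unfold Nbhd; rw [if_pos hlt]; exact Finset.mem_filter.2 ⟨hbk, hE⟩⟩)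
    have hne : a ≠ b := fun hh => (Finset.disjoint_left.1 hdisj) ha (hh ▸ hbk)
    exact (hT.2 a b hne).2 hnba
  · refine ⟨B0, S i, hdisj'.symm, hB0r, hAir, ?_⟩
    intro b hb a ha
    have hbk : b ∈ S k := (Finset.mem_sdiff.1 hb).1
    have hbU : b ∉ U := (Finset.mem_sdiff.1 hb).2
    have hnab : ¬ E a b := by
      intro hE
      exact hbU (Finset.mem_biUnion.2 ⟨a, ha, by
        unfold Nbhd; rw [if_neg hlt]; exact Finset.mem_filter.2 ⟨hbk, hE⟩⟩)
    have hne : b ≠ a := fun hh => (Finset.disjoint_left.1 hdisj) ha (hh ▸ hbk)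
    exact (hT.2 b a hne).2 hnab

/-- For any triple of disjoint linear-size sets and any distinct indices `i, j`,
the triple is an `(i,j)`-triple, or an `(i,l)`-triple for the remaining index `l`,
or there are two disjoint sets of size at least `(c/2)·n`, one complete to the other. -/
theorem stmt7 {V : Type*} [Fintype V] [DecidableEq V] (E : V → V → Prop)
    [DecidableRel E] (hT : IsTournament E) (S : Fin 3 → Finset V)
    (hdisj : ∀ i j, i ≠ j → Disjoint (S i) (S j))
    (c : ℝ) (hc : 0 < c) (hsize : ∀ i, c * (Fintype.card V : ℝ) ≤ ((S i).card : ℝ))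
    (i j : Fin 3) (hij : i ≠ j) :
    IsIJTriple E S i j ∨ IsIJTriple E S i (-(i + j)) ∨
    (∃ A B : Finset V, Disjoint A B ∧ c / 2 * (Fintype.card V : ℝ) ≤ (A.card : ℝ) ∧
      c / 2 * (Fintype.card V : ℝ) ≤ (B.card : ℝ) ∧ CompleteTo E A B) := by
  have hil : i ≠ -(i + j) := by
    revert hij; fin_cases i <;> fin_cases j <;> decide
  by_cases hA : (S j).card ≤ 2 * ((S i).biUnion (Nbhd E S i j)).card
  · by_cases hB : (S (-(i + j))).card ≤
        2 * ((S i).biUnion (Nbhd E S i (-(i + j)))).card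
    · set L := (S i).toList with hL
      have hnd : L.Nodup := Finset.nodup_toList _
      have htf : L.toFinset = S i := Finset.toList_toFinset _
      have htake : (L.take L.length).toFinset = S i := by
        rw [List.take_length, htf]
      have hjl : -(i + -(i + j)) = j := by
        fin_cases i <;> fin_cases j <;> decide
      have hAmem : L.length ∈ {k | (S j).card ≤
          2 * (((L.take k).toFinset).biUnion (Nbhd E S i j)).card} := by
        show (S j).card ≤ _
        rw [htake]; exact hA
      have hBmem : L.length ∈ {k | (S (-(i + j))).card ≤
          2 * (((L.take k).toFinset).biUnion (Nbhd E S i (-(i + j)))).card} := by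
        show (S (-(i + j))).card ≤ _
        rw [htake]; exact hB
      rcases le_total
        (sInf {k | (S (-(i + j))).card ≤
          2 * (((L.take k).toFinset).biUnion (Nbhd E S i (-(i + j)))).card})
        (sInf {k | (S j).card ≤
          2 * (((L.take k).toFinset).biUnion (Nbhd E S i j)).card}) with hle | hle
      · exact Or.inl ⟨L, hnd, htf, ⟨L.length, hAmem⟩, ⟨L.length, hBmem⟩, hle⟩
      · refine Or.inr (Or.inl ⟨L, hnd, htf, ⟨L.length, hBmem⟩, ?_, ?_⟩)
        · exact ⟨L.length, by simp only [Set.mem_setOf_eq, hjl]; exact hAmem⟩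
        · simp only [hjl]; exact hle
    · exact Or.inr (Or.inr (helper7 E hT S i (-(i + j)) (hdisj _ _ hil) c hc
        (hsize i) (hsize _) hB))
  · exact Or.inr (Or.inr (helper7 E hT S i j (hdisj _ _ hij) c hc
      (hsize i) (hsize j) hA))
end

section
/- Let T be a tournament and S_1, S_2, S_3 pairwise disjoint subsets of V(T) each of size at least c·n (n = |T|). If |∪_{v ∈ S_i} N^σ(v,j)| < |S_j|/2 for distinct i,j, then there exist two disjoint sets A, B of vertices of T with |A|, |B| ≥ (c/2)·n such that one of them is complete to the other. -/
/-- If `|⋃_{v ∈ S i} N^σ(v,j)| < |S j|/2` for distinct indices `i, j`, then there are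
two disjoint sets of size at least `(c/2)·n` such that one is complete to the other. -/
theorem stmt8 {V : Type*} [Fintype V] [DecidableEq V] (E : V → V → Prop)
    [DecidableRel E] (hT : IsTournament E) (S : Fin 3 → Finset V)
    (hdisj : ∀ i j, i ≠ j → Disjoint (S i) (S j))
    (c : ℝ) (hc : 0 < c) (hsize : ∀ i, c * (Fintype.card V : ℝ) ≤ ((S i).card : ℝ))
    (i j : Fin 3) (hij : i ≠ j)
    (hsmall : 2 * (((S i).biUnion (Nbhd E S i j)).card) < (S j).card) :
    ∃ A B : Finset V, Disjoint A B ∧ c / 2 * (Fintype.card V : ℝ) ≤ (A.card : ℝ) ∧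
      c / 2 * (Fintype.card V : ℝ) ≤ (B.card : ℝ) ∧
      (CompleteTo E A B ∨ CompleteTo E B A) := by
  classical
  set U := (S i).biUnion (Nbhd E S i j) with hU
  set B := S j \ U with hB
  have hBsub : B ⊆ S j := Finset.sdiff_subset
  -- size of B
  have hcardU : (S j).card ≤ B.card + U.card := by
    calc (S j).card ≤ (B ∪ U).card := Finset.card_le_card (by
          intro x hx
          by_cases hxU : x ∈ U
          · exact Finset.mem_union_right _ hxU
          · exact Finset.mem_union_left _ (Finset.mem_sdiff.mpr ⟨hx, hxU⟩))
      _ ≤ B.card + U.card := Finset.card_union_le _ _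
  have h2B : (S j).card < 2 * B.card := by omega
  have hn0 : (0:ℝ) ≤ (Fintype.card V : ℝ) := by positivity
  have hBsize : c / 2 * (Fintype.card V : ℝ) ≤ (B.card : ℝ) := by
    have h1 := hsize j
    have : ((S j).card : ℝ) < 2 * (B.card : ℝ) := by exact_mod_cast h2B
    nlinarith
  have hAsize : c / 2 * (Fintype.card V : ℝ) ≤ ((S i).card : ℝ) := by
    have := hsize i
    nlinarith
  have hdisjAB : Disjoint (S i) B :=
    (hdisj i j hij).mono_right hBsub
  -- membership in B means not in any Nbhd
  have hkey : ∀ v ∈ S i, ∀ w ∈ B, w ∉ Nbhd E S i j v := by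
    intro v hv w hw hmem
    exact (Finset.mem_sdiff.mp hw).2 (Finset.mem_biUnion.mpr ⟨v, hv, hmem⟩)
  have hne : ∀ v ∈ S i, ∀ w ∈ B, v ≠ w := by
    intro v hv w hw h
    exact (hdisjAB.forall_ne_finset hv hw) h
  refine ⟨S i, B, hdisjAB, hAsize, hBsize, ?_⟩
  by_cases hlt : i < j
  · left
    intro v hv w hw
    have h := hkey v hv w hw
    rw [Nbhd, if_pos hlt, Finset.mem_filter] at h
    have hwj : w ∈ S j := hBsub hw
    have hEwv : ¬ E w v := fun hEwv => h ⟨hwj, hEwv⟩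
    exact ((hT.2 v w (hne v hv w hw)).mpr hEwv)
  · right
    intro w hw v hv
    have h := hkey v hv w hw
    rw [Nbhd, if_neg hlt, Finset.mem_filter] at h
    have hwj : w ∈ S j := hBsub hw
    have hEvw : ¬ E v w := fun hEvw => h ⟨hwj, hEvw⟩
    exact ((hT.2 w v (hne v hv w hw).symm).mpr hEvw)
end

section
/- Let T be a tournament with vertex subsets V_1,...,V_k pairwise disjoint, each nonempty, such that each pair (V_i, V_j) is η-regular with d(V_i,V_j) ≥ λ and d(V_j,V_i) ≥ λ, where η = η(k, λ) is sufficiently small. Then for every tournament H on vertices x_1,...,x_k there exist vertices v_i ∈ V_i such that the map x_i ↦ v_i is an isomorphism from H to the subtournament of T induced by {v_1,...,v_k}. -/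
open Finset

/-- The directed density `d(A,B) = e(A,B)/(|A||B|)`, where `e(A,B)` is the number of
edges directed from `A` to `B`. -/
noncomputable def density {V : Type*} (E : V → V → Prop) [DecidableRel E]
    (A B : Finset V) : ℝ :=
  ((((A ×ˢ B).filter fun p => E p.1 p.2).card : ℝ)) / ((A.card : ℝ) * (B.card : ℝ))

/-- The pair `(A,B)` is `η`-regular: all `X ⊆ A`, `Y ⊆ B` with `|X| ≥ η|A|`,
`|Y| ≥ η|B|` satisfy `|d(X,Y) - d(A,B)| ≤ η`. -/
def IsRegularPair {V : Type*} (E : V → V → Prop) [DecidableRel E]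
    (A B : Finset V) (η : ℝ) : Prop :=
  ∀ X ⊆ A, ∀ Y ⊆ B, η * (A.card : ℝ) ≤ (X.card : ℝ) →
    η * (B.card : ℝ) ≤ (Y.card : ℝ) → |density E X Y - density E A B| ≤ η

lemma card_filter_prod {V : Type*} (X Y : Finset V) (R : V → V → Prop) [DecidableRel R] :
    ((X ×ˢ Y).filter fun p => R p.1 p.2).card = ∑ v ∈ X, (Y.filter fun u => R v u).card := by
  rw [Finset.card_filter, Finset.sum_product]
  simp only [Finset.card_filter]

lemma card_filter_prod' {V : Type*} (X Y : Finset V) (R : V → V → Prop) [DecidableRel R] :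
    ((Y ×ˢ X).filter fun p => R p.1 p.2).card = ∑ v ∈ X, (Y.filter fun u => R u v).card := by
  rw [Finset.card_filter, Finset.sum_product, Finset.sum_comm]
  simp only [Finset.card_filter]

open scoped Classical in
lemma count_bad_out {V : Type*} (R : V → V → Prop) [DecidableRel R] (η lam : ℝ)
    (hη : 0 < η) (A D Y : Finset V) (hD : D ⊆ A) (hA : 0 < (A.card : ℝ))
    (hd : ∀ X ⊆ A, η * (A.card : ℝ) ≤ (X.card : ℝ) → lam - η ≤ density R X Y) :
    ((D.filter fun v => (((Y.filter fun u => R v u).card : ℝ) < (lam - η) * (Y.card : ℝ))).card : ℝ)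
      < η * A.card := by
  by_contra hcon
  push_neg at hcon
  set X := D.filter fun v => (((Y.filter fun u => R v u).card : ℝ) < (lam - η) * (Y.card : ℝ)) with hXdef
  have hXA : X ⊆ A := (Finset.filter_subset _ _).trans hD
  have hdX := hd X hXA hcon
  have hXpos : 0 < (X.card : ℝ) := lt_of_lt_of_le (by positivity) hcon
  have hXne : X.Nonempty := Finset.card_pos.mp (by exact_mod_cast hXpos)
  have hsum : (((X ×ˢ Y).filter fun p => R p.1 p.2).card : ℝ)
      < (lam - η) * ((X.card : ℝ) * (Y.card : ℝ)) := by
    rw [card_filter_prod]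
    push_cast
    calc (∑ v ∈ X, ((Y.filter fun u => R v u).card : ℝ))
        < ∑ _v ∈ X, (lam - η) * (Y.card : ℝ) :=
          Finset.sum_lt_sum_of_nonempty hXne (fun v hv => (Finset.mem_filter.mp hv).2)
      _ = (lam - η) * ((X.card : ℝ) * (Y.card : ℝ)) := by
          rw [Finset.sum_const, nsmul_eq_mul]; ring
  have hYpos : 0 < (Y.card : ℝ) := by
    obtain ⟨v, hv⟩ := hXne
    have h1 : 0 < (lam - η) * (Y.card : ℝ) :=
      lt_of_le_of_lt (Nat.cast_nonneg _) (Finset.mem_filter.mp hv).2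
    rcases (Nat.cast_nonneg (α := ℝ) Y.card).lt_or_eq with h | h
    · exact h
    · exfalso; rw [← h, mul_zero] at h1; exact lt_irrefl _ h1
  have hlt : density R X Y < lam - η := by
    rw [density, div_lt_iff₀ (by positivity)]
    linarith
  linarith

open scoped Classical in
lemma count_bad_in {V : Type*} (R : V → V → Prop) [DecidableRel R] (η lam : ℝ)
    (hη : 0 < η) (A D Y : Finset V) (hD : D ⊆ A) (hA : 0 < (A.card : ℝ))
    (hd : ∀ X ⊆ A, η * (A.card : ℝ) ≤ (X.card : ℝ) → lam - η ≤ density R Y X) :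
    ((D.filter fun v => (((Y.filter fun u => R u v).card : ℝ) < (lam - η) * (Y.card : ℝ))).card : ℝ)
      < η * A.card := by
  by_contra hcon
  push_neg at hcon
  set X := D.filter fun v => (((Y.filter fun u => R u v).card : ℝ) < (lam - η) * (Y.card : ℝ)) with hXdef
  have hXA : X ⊆ A := (Finset.filter_subset _ _).trans hD
  have hdX := hd X hXA hcon
  have hXpos : 0 < (X.card : ℝ) := lt_of_lt_of_le (by positivity) hcon
  have hXne : X.Nonempty := Finset.card_pos.mp (by exact_mod_cast hXpos)
  have hsum : (((Y ×ˢ X).filter fun p => R p.1 p.2).card : ℝ)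
      < (lam - η) * ((Y.card : ℝ) * (X.card : ℝ)) := by
    rw [card_filter_prod']
    push_cast
    calc (∑ v ∈ X, ((Y.filter fun u => R u v).card : ℝ))
        < ∑ _v ∈ X, (lam - η) * (Y.card : ℝ) :=
          Finset.sum_lt_sum_of_nonempty hXne (fun v hv => (Finset.mem_filter.mp hv).2)
      _ = (lam - η) * ((Y.card : ℝ) * (X.card : ℝ)) := by
          rw [Finset.sum_const, nsmul_eq_mul]; ring
  have hYpos : 0 < (Y.card : ℝ) := by
    obtain ⟨v, hv⟩ := hXne
    have h1 : 0 < (lam - η) * (Y.card : ℝ) :=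
      lt_of_le_of_lt (Nat.cast_nonneg _) (Finset.mem_filter.mp hv).2
    rcases (Nat.cast_nonneg (α := ℝ) Y.card).lt_or_eq with h | h
    · exact h
    · exfalso; rw [← h, mul_zero] at h1; exact lt_irrefl _ h1
  have hlt : density R Y X < lam - η := by
    rw [density, div_lt_iff₀ (by positivity)]
    linarith
  linarith

lemma exists_good {V : Type*} [DecidableEq V] {ι : Type*} [DecidableEq ι]
    (S : Finset ι) (D : Finset V) (F : ι → Finset V) (c : ℝ)
    (hF : ∀ j ∈ S, F j ⊆ D) (hc : ∀ j ∈ S, ((F j).card : ℝ) ≤ c)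
    (hlt : (S.card : ℝ) * c < (D.card : ℝ)) :
    ∃ v ∈ D, ∀ j ∈ S, v ∉ F j := by
  have hsub : S.biUnion F ⊆ D := Finset.biUnion_subset.mpr hF
  have h1 : ((S.biUnion F).card : ℝ) ≤ (S.card : ℝ) * c := by
    calc ((S.biUnion F).card : ℝ) ≤ ((∑ j ∈ S, (F j).card : ℕ) : ℝ) := by
          exact_mod_cast Finset.card_biUnion_le
      _ = ∑ j ∈ S, ((F j).card : ℝ) := by push_cast; rfl
      _ ≤ ∑ _j ∈ S, c := Finset.sum_le_sum hc
      _ = S.card * c := by rw [Finset.sum_const, nsmul_eq_mul]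
  have h2 : (S.biUnion F).card < D.card := by exact_mod_cast lt_of_le_of_lt h1 hlt
  have h3 : (D \ S.biUnion F).Nonempty := by
    rw [← Finset.card_pos, Finset.card_sdiff_of_subset hsub]; omega
  obtain ⟨v, hv⟩ := h3
  rw [Finset.mem_sdiff] at hv
  exact ⟨v, hv.1, fun j hj hvj => hv.2 (Finset.mem_biUnion.mpr ⟨j, hj, hvj⟩)⟩

/-- Embedding lemma for tournaments: for every `k` and `0 < λ < 1` there is `η > 0`
such that whenever disjoint nonempty sets `V₁,...,V_k` in a tournament `T` are pairwise
`η`-regular with both directed densities at least `λ`, every `k`-vertex tournament `H`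
embeds with its `i`-th vertex in `V_i`. -/
theorem stmt13 (k : ℕ) (lam : ℝ) (h0 : 0 < lam) (h1 : lam < 1) :
    ∃ η : ℝ, 0 < η ∧ η < 1 ∧
      ∀ (V : Type) [Fintype V] (T : V → V → Prop) [DecidableRel T],
        IsTournament T →
        ∀ H : Fin k → Fin k → Prop, IsTournament H →
        ∀ Vs : Fin k → Finset V,
          (∀ i j, i ≠ j → Disjoint (Vs i) (Vs j)) →
          (∀ i, (Vs i).Nonempty) →
          (∀ i j, i ≠ j → IsRegularPair T (Vs i) (Vs j) η) →
          (∀ i j, i ≠ j → lam ≤ density T (Vs i) (Vs j)) →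
          ∃ f : Fin k → V, (∀ i, f i ∈ Vs i) ∧ Function.Injective f ∧
            ∀ i j, i ≠ j → (H i j ↔ T (f i) (f j)) := by
  have hl2pos : (0:ℝ) < lam / 2 := by linarith
  have hl2lt1 : lam / 2 < 1 := by linarith
  have hk1 : (0:ℝ) < (k : ℝ) + 1 := by positivity
  refine ⟨(lam/2)^(k+1) / ((k:ℝ)+1), by positivity, ?_, ?_⟩
  · have hp1 : (lam/2)^(k+1) < 1 := pow_lt_one₀ (le_of_lt hl2pos) hl2lt1 (Nat.succ_ne_zero k)
    have : (lam/2)^(k+1) / ((k:ℝ)+1) ≤ (lam/2)^(k+1) :=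
      div_le_self (by positivity) (by linarith [Nat.cast_nonneg (α := ℝ) k])
    linarith
  · set η : ℝ := (lam/2)^(k+1) / ((k:ℝ)+1) with hηdef
    have hηpos : 0 < η := by rw [hηdef]; positivity
    have hηle : η ≤ (lam/2)^(k+1) :=
      div_le_self (by positivity) (by linarith [Nat.cast_nonneg (α := ℝ) k])
    have hpow : ∀ t : ℕ, t ≤ k + 1 → (lam/2)^(k+1) ≤ (lam/2)^t := fun t ht =>
      pow_le_pow_of_le_one (le_of_lt hl2pos) (le_of_lt hl2lt1) ht
    have hηlam : η ≤ lam / 2 := by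
      have := hpow 1 (by omega)
      rw [pow_one] at this; linarith
    have hkη : ((k:ℝ) + 1) * η = (lam/2)^(k+1) := by
      rw [hηdef]; field_simp
    intro V _ T _ hT H hH Vs hdisj hnon hreg hdens
    classical
    have main : ∀ r t : ℕ, t + r = k →
        ∀ (g : Fin k → V) (C : Fin k → Finset V),
        (∀ i : Fin k, (i:ℕ) < t → g i ∈ Vs i) →
        (∀ i j : Fin k, (i:ℕ) < t → (j:ℕ) < t → i ≠ j → (H i j ↔ T (g i) (g j))) →
        (∀ j : Fin k, t ≤ (j:ℕ) → C j ⊆ Vs j) →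
        (∀ j : Fin k, t ≤ (j:ℕ) → (lam/2)^t * ((Vs j).card : ℝ) ≤ ((C j).card : ℝ)) →
        (∀ i j : Fin k, (i:ℕ) < t → t ≤ (j:ℕ) → ∀ v ∈ C j,
          (H i j ↔ T (g i) v) ∧ (H j i ↔ T v (g i))) →
        ∃ f : Fin k → V, (∀ i, f i ∈ Vs i) ∧ ∀ i j, i ≠ j → (H i j ↔ T (f i) (f j)) := by
      intro r
      induction r with
      | zero =>
        intro t htk g C hg hedge _ _ _
        exact ⟨g, fun i => hg i (by omega), fun i j hij => hedge i j (by omega) (by omega) hij⟩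
      | succ r ih =>
        intro t htk g C hg hedge hsub hcard hcomp
        have htlt : t < k := by omega
        set it : Fin k := ⟨t, htlt⟩ with hitdef
        have hVit : 0 < ((Vs it).card : ℝ) := by exact_mod_cast (hnon it).card_pos
        have hCsub : C it ⊆ Vs it := hsub it le_rfl
        have hCit : (lam/2)^t * ((Vs it).card : ℝ) ≤ ((C it).card : ℝ) := hcard it le_rfl
        have hηt : η ≤ (lam/2)^t := hηle.trans (hpow t (by omega))
        have hCjcard : ∀ j : Fin k, t ≤ (j:ℕ) → η * ((Vs j).card : ℝ) ≤ ((C j).card : ℝ) := by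
          intro j hj
          refine le_trans ?_ (hcard j hj)
          exact mul_le_mul_of_nonneg_right hηt (Nat.cast_nonneg _)
        obtain ⟨v, hvC, hvgood⟩ := exists_good
          (univ.filter fun j : Fin k => t < (j:ℕ)) (C it)
          (fun j => (C it).filter fun u =>
            ((((C j).filter fun w => if H it j then T u w else T w u).card : ℝ)
              < (lam - η) * ((C j).card : ℝ)))
          (η * ((Vs it).card : ℝ))
          (fun j _ => Finset.filter_subset _ _)
          (by
            intro j hjS
            have hj : t < (j:ℕ) := (Finset.mem_filter.mp hjS).2
            have hij : it ≠ j := Fin.ne_of_val_ne (show t ≠ (j:ℕ) by omega)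
            have hCj : C j ⊆ Vs j := hsub j (le_of_lt hj)
            have hCjc := hCjcard j (le_of_lt hj)
            show (((C it).filter fun u =>
                ((((C j).filter fun w => if H it j then T u w else T w u).card : ℝ)
                  < (lam - η) * ((C j).card : ℝ))).card : ℝ) ≤ η * ((Vs it).card : ℝ)
            by_cases hHj : H it j
            · have heq : ((C it).filter fun u =>
                  ((((C j).filter fun w => if H it j then T u w else T w u).card : ℝ)
                    < (lam - η) * ((C j).card : ℝ)))
                  = ((C it).filter fun u =>
                  ((((C j).filter fun w => T u w).card : ℝ)
                    < (lam - η) * ((C j).card : ℝ))) := by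
                apply Finset.filter_congr
                intro u _
                have h2 : ((C j).filter fun w => if H it j then T u w else T w u)
                    = ((C j).filter fun w => T u w) := by
                  apply Finset.filter_congr
                  intro w _
                  simp [hHj]
                rw [h2]
              rw [heq]
              refine le_of_lt (count_bad_out T η lam hηpos (Vs it) (C it) (C j) hCsub hVit ?_)
              intro X hX hXc
              have hr := hreg it j hij X hX (C j) hCj hXc hCjc
              have hd2 := hdens it j hij
              have := abs_le.mp hr
              linarith [this.1]
            · have heq : ((C it).filter fun u =>
                  ((((C j).filter fun w => if H it j then T u w else T w u).card : ℝ)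
                    < (lam - η) * ((C j).card : ℝ)))
                  = ((C it).filter fun u =>
                  ((((C j).filter fun w => T w u).card : ℝ)
                    < (lam - η) * ((C j).card : ℝ))) := by
                apply Finset.filter_congr
                intro u _
                have h2 : ((C j).filter fun w => if H it j then T u w else T w u)
                    = ((C j).filter fun w => T w u) := by
                  apply Finset.filter_congr
                  intro w _
                  simp [hHj]
                rw [h2]
              rw [heq]
              refine le_of_lt (count_bad_in T η lam hηpos (Vs it) (C it) (C j) hCsub hVit ?_)
              intro X hX hXc
              have hr := hreg j it hij.symm (C j) hCj X hX hCjc hXc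
              have hd2 := hdens j it hij.symm
              have := abs_le.mp hr
              linarith [this.1])
          (by
            have hS : (((univ.filter fun j : Fin k => t < (j:ℕ)).card : ℕ) : ℝ) ≤ (k:ℝ) := by
              have h1 : (univ.filter fun j : Fin k => t < (j:ℕ)).card ≤ k := by
                calc (univ.filter fun j : Fin k => t < (j:ℕ)).card
                    ≤ (univ : Finset (Fin k)).card := Finset.card_filter_le _ _
                  _ = k := by simp
              exact_mod_cast h1
            have hP := hVit
            have h3 : (k:ℝ) * (η * ((Vs it).card : ℝ)) < ((k:ℝ)+1) * (η * ((Vs it).card : ℝ)) := by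
              nlinarith [mul_pos hηpos hVit]
            have h4 : ((k:ℝ)+1) * (η * ((Vs it).card : ℝ)) = (lam/2)^(k+1) * ((Vs it).card : ℝ) := by
              rw [← hkη]; ring
            have h5 : (lam/2)^(k+1) * ((Vs it).card : ℝ) ≤ (lam/2)^t * ((Vs it).card : ℝ) :=
              mul_le_mul_of_nonneg_right (hpow t (by omega)) (le_of_lt hVit)
            have h2 : (((univ.filter fun j : Fin k => t < (j:ℕ)).card : ℕ) : ℝ)
                * (η * ((Vs it).card : ℝ)) ≤ (k:ℝ) * (η * ((Vs it).card : ℝ)) :=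
              mul_le_mul_of_nonneg_right hS (by positivity)
            linarith)
        have hgood : ∀ j : Fin k, t < (j:ℕ) →
            (lam - η) * ((C j).card : ℝ)
              ≤ (((C j).filter fun w => if H it j then T v w else T w v).card : ℝ) := by
          intro j hj
          have h := hvgood j (Finset.mem_filter.mpr ⟨Finset.mem_univ _, hj⟩)
          rw [Finset.mem_filter] at h
          push_neg at h
          exact h hvC
        -- new embedding and candidate sets
        set g' : Fin k → V := Function.update g it v with hg'def
        set C' : Fin k → Finset V :=
          fun j => (C j).filter fun w => if H it j then T v w else T w v with hC'def
        have hg'it : g' it = v := Function.update_self _ _ _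
        have hg'ne : ∀ i : Fin k, (i:ℕ) < t → g' i = g i := by
          intro i hi
          exact Function.update_of_ne (Fin.ne_of_val_ne (show (i:ℕ) ≠ t by omega)) _ _
        have hC'sub : ∀ j : Fin k, C' j ⊆ C j := fun j => Finset.filter_subset _ _
        have hfin : ∀ i : Fin k, (i:ℕ) < t + 1 → (i:ℕ) < t ∨ i = it := by
          intro i hi
          rcases Nat.lt_or_ge (i:ℕ) t with h | h
          · exact Or.inl h
          · exact Or.inr (Fin.ext (show (i:ℕ) = t by omega))
        refine ih (t+1) (by omega) g' C' ?_ ?_ ?_ ?_ ?_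
        · intro i hi
          rcases hfin i hi with h | h
          · rw [hg'ne i h]; exact hg i h
          · rw [h, hg'it]; exact hCsub hvC
        · intro i j hi hj hij
          rcases hfin i hi with h | h <;> rcases hfin j hj with h' | h'
          · rw [hg'ne i h, hg'ne j h']; exact hedge i j h h' hij
          · rw [hg'ne i h, h', hg'it]
            exact (hcomp i it h le_rfl v hvC).1
          · rw [hg'ne j h', h, hg'it]
            exact (hcomp j it h' le_rfl v hvC).2
          · exact absurd (h.trans h'.symm) hij
        · intro j hj
          exact (hC'sub j).trans (hsub j (by omega))
        · intro j hj
          have hj' : t < (j:ℕ) := by omega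
          have h1 := hcard j (le_of_lt hj')
          have h2 := hgood j hj'
          have h3 : (0:ℝ) ≤ ((C j).card : ℝ) := Nat.cast_nonneg _
          have h4 : (lam/2) * ((C j).card : ℝ) ≤ (lam - η) * ((C j).card : ℝ) :=
            mul_le_mul_of_nonneg_right (by linarith) h3
          have h5 : (lam/2)^(t+1) * ((Vs j).card : ℝ)
              = (lam/2) * ((lam/2)^t * ((Vs j).card : ℝ)) := by ring
          have h6 : (lam/2) * ((lam/2)^t * ((Vs j).card : ℝ)) ≤ (lam/2) * ((C j).card : ℝ) :=
            mul_le_mul_of_nonneg_left h1 (le_of_lt hl2pos)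
          calc (lam/2)^(t+1) * ((Vs j).card : ℝ) ≤ (lam/2) * ((C j).card : ℝ) := by
                rw [h5]; exact h6
            _ ≤ (lam - η) * ((C j).card : ℝ) := h4
            _ ≤ ((C' j).card : ℝ) := h2
        · intro i j hi hj u hu
          have hj' : t < (j:ℕ) := by omega
          have hjit : j ≠ it := Fin.ne_of_val_ne (show (j:ℕ) ≠ t by omega)
          have huC : u ∈ C j := hC'sub j hu
          rcases hfin i hi with h | h
          · rw [hg'ne i h]
            exact hcomp i j h (by omega) u huC
          · rw [h, hg'it]
            have hune : u ≠ v := by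
              intro heq
              have h1 : u ∈ Vs j := hsub j (by omega) huC
              have h2 : u ∈ Vs it := heq ▸ hCsub hvC
              exact Finset.disjoint_left.mp (hdisj j it hjit) h1 h2
            have hup : if H it j then T v u else T u v := (Finset.mem_filter.mp hu).2
            by_cases hHj : H it j
            · rw [if_pos hHj] at hup
              refine ⟨⟨fun _ => hup, fun _ => hHj⟩, ?_, ?_⟩
              · intro hji
                exact absurd hHj ((hH.2 j it hjit).mp hji)
              · intro htuv
                exact absurd hup ((hT.2 u v hune).mp htuv)
            · rw [if_neg hHj] at hup
              refine ⟨⟨fun hh => absurd hh hHj, fun hTvu => absurd hTvu ((hT.2 u v hune).mp hup)⟩,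
                fun _ => hup, fun _ => (hH.2 j it hjit).mpr hHj⟩
    obtain ⟨f, hf1, hf2⟩ := main k 0 (by omega) (fun i => (hnon i).choose) Vs
      (fun i hi => absurd hi (Nat.not_lt_zero _))
      (fun i j hi _ _ => absurd hi (Nat.not_lt_zero _))
      (fun j _ => subset_rfl)
      (fun j _ => by rw [pow_zero, one_mul])
      (fun i j hi _ _ _ => absurd hi (Nat.not_lt_zero _))
    refine ⟨f, hf1, ?_, hf2⟩
    intro a b hab
    by_contra hne
    exact Finset.disjoint_left.mp (hdisj a b hne) (hf1 a) (hab ▸ hf1 b)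
end

section
/- Let W_1,...,W_P be pairwise disjoint sets of equal size w in a tournament T with d(W_i, W_j) ≥ 1 - Λ for i < j, where Λ = λ/(4P). Then there exist subsets A_i ⊆ W_i with |A_1| = ... = |A_P| = ⌈w/2⌉ such that: for all i < j and every v ∈ A_i, d({v}, A_j) ≥ 1 - λ, and for all i < j and every v ∈ A_j, d(A_i, {v}) ≥ 1 - λ. -/
lemma aux_card_left {V : Type*} [DecidableEq V] (E : V → V → Prop) [DecidableRel E]
    (A B : Finset V) :
    ((A ×ˢ B).filter fun p => E p.1 p.2).card = ∑ a ∈ A, (B.filter fun b => E a b).card := by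
  rw [Finset.card_filter, Finset.sum_product]
  exact Finset.sum_congr rfl fun a _ => (Finset.card_filter _ _).symm

lemma aux_card_right {V : Type*} [DecidableEq V] (E : V → V → Prop) [DecidableRel E]
    (A B : Finset V) :
    ((A ×ˢ B).filter fun p => E p.1 p.2).card = ∑ b ∈ B, (A.filter fun a => E a b).card := by
  rw [Finset.card_filter, Finset.sum_product_right]
  exact Finset.sum_congr rfl fun b _ => (Finset.card_filter _ _).symm

lemma aux_bad_bound {α : Type*} (A S : Finset α) (f : α → ℝ) (θ c : ℝ)
    (hS : S ⊆ A) (hf : ∀ a ∈ A, 0 ≤ f a) (hbad : ∀ a ∈ S, θ < f a)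
    (hθ : 0 ≤ θ) (hc : 0 ≤ c) (hsum : ∑ a ∈ A, f a ≤ θ * c) :
    (S.card : ℝ) ≤ c := by
  rcases eq_or_lt_of_le hθ with h0 | h0
  · have hA0 : ∑ a ∈ A, f a ≤ 0 := by rw [← h0] at hsum; simpa using hsum
    have hA0' : ∑ a ∈ A, f a = 0 := le_antisymm hA0 (Finset.sum_nonneg hf)
    have hz : ∀ a ∈ A, f a = 0 := (Finset.sum_eq_zero_iff_of_nonneg hf).1 hA0'
    have : S = ∅ := by
      by_contra h
      obtain ⟨a, ha⟩ := Finset.nonempty_iff_ne_empty.2 h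
      have := hbad a ha
      rw [hz a (hS ha), ← h0] at this
      exact lt_irrefl _ this
    simpa [this] using hc
  · have h1 : (S.card : ℝ) * θ ≤ ∑ a ∈ S, f a := by
      calc (S.card : ℝ) * θ = ∑ _a ∈ S, θ := by rw [Finset.sum_const, nsmul_eq_mul]
        _ ≤ ∑ a ∈ S, f a := Finset.sum_le_sum (fun a ha => (hbad a ha).le)
    have h2 : ∑ a ∈ S, f a ≤ ∑ a ∈ A, f a :=
      Finset.sum_le_sum_of_subset_of_nonneg hS (fun a ha _ => hf a ha)
    have h3 : (S.card : ℝ) * θ ≤ c * θ := by nlinarith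
    exact le_of_mul_le_mul_right h3 h0


/-- Cleaning step: from pairwise disjoint `W₁,...,W_P` of equal size `w` with
`d(W_i, W_j) ≥ 1 - λ/(4P)` for `i < j`, one can pick `A_i ⊆ W_i` of size `⌈w/2⌉` so
that every `v ∈ A_i` satisfies `d({v}, A_j) ≥ 1 - λ` for `i < j`, and every `v ∈ A_j`
satisfies `d(A_i, {v}) ≥ 1 - λ` for `i < j`. -/
theorem stmt15 {V : Type*} [Fintype V] [DecidableEq V] (E : V → V → Prop)
    [DecidableRel E] (hT : IsTournament E) (P : ℕ) (hP : 0 < P)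
    (lam : ℝ) (hlam : 0 ≤ lam) (W : Fin P → Finset V) (w : ℕ)
    (hdisj : ∀ i j, i ≠ j → Disjoint (W i) (W j))
    (hcard : ∀ i, (W i).card = w)
    (hdens : ∀ i j, i < j → 1 - lam / (4 * (P : ℝ)) ≤ density E (W i) (W j)) :
    ∃ A : Fin P → Finset V,
      (∀ i, A i ⊆ W i) ∧ (∀ i, (A i).card = (w + 1) / 2) ∧
      (∀ i j, i < j → ∀ v ∈ A i, 1 - lam ≤ density E {v} (A j)) ∧
      (∀ i j, i < j → ∀ v ∈ A j, 1 - lam ≤ density E (A i) {v}) := by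
  classical
  rcases Nat.eq_zero_or_pos w with hw0 | hw
  · refine ⟨fun _ => ∅, fun i => Finset.empty_subset _, fun i => by simp [hw0], ?_, ?_⟩ <;>
      · intro i j hij v hv
        simp at hv
  have hP' : (0:ℝ) < P := by exact_mod_cast hP
  have hw' : (0:ℝ) < w := by exact_mod_cast hw
  set θ : ℝ := lam * w / 2 with hθdef
  have hθ0 : 0 ≤ θ := by positivity
  have hc0 : (0:ℝ) ≤ (w:ℝ) / (2*P) := by positivity
  -- edge count bound
  have key : ∀ X Y : Finset V, X.card = w → Y.card = w →
      1 - lam / (4*(P:ℝ)) ≤ density E X Y →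
      ((w:ℝ) * w) - (((X ×ˢ Y).filter fun p => E p.1 p.2).card : ℝ) ≤ θ * ((w:ℝ)/(2*P)) := by
    intro X Y hX hY hd
    have hpos : (0:ℝ) < (X.card : ℝ) * Y.card := by rw [hX, hY]; positivity
    rw [density] at hd
    have hd' := (le_div_iff₀ hpos).1 hd
    rw [hX, hY] at hd'
    have heq : θ * ((w:ℝ)/(2*P)) = lam / (4*(P:ℝ)) * ((w:ℝ)*w) := by
      rw [hθdef]; field_simp; ring
    rw [heq]
    nlinarith
  have keyOut : ∀ i j : Fin P, i < j →
      ∑ v ∈ W i, ((w:ℝ) - (((W j).filter fun u => E v u).card : ℝ)) ≤ θ * ((w:ℝ)/(2*P)) := by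
    intro i j hij
    have h := key (W i) (W j) (hcard i) (hcard j) (hdens i j hij)
    rw [aux_card_left] at h
    have e2 : ((∑ v ∈ W i, ((W j).filter fun u => E v u).card : ℕ) : ℝ)
        = ∑ v ∈ W i, (((W j).filter fun u => E v u).card : ℝ) := by push_cast; rfl
    have e1 : ∑ v ∈ W i, ((w:ℝ) - (((W j).filter fun u => E v u).card : ℝ))
        = (w:ℝ)*w - ∑ v ∈ W i, (((W j).filter fun u => E v u).card : ℝ) := by
      rw [Finset.sum_sub_distrib, Finset.sum_const, hcard i, nsmul_eq_mul]
    rw [e1, ← e2]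
    exact h
  have keyIn : ∀ i j : Fin P, i < j →
      ∑ v ∈ W j, ((w:ℝ) - (((W i).filter fun u => E u v).card : ℝ)) ≤ θ * ((w:ℝ)/(2*P)) := by
    intro i j hij
    have h := key (W i) (W j) (hcard i) (hcard j) (hdens i j hij)
    rw [aux_card_right] at h
    have e2 : ((∑ v ∈ W j, ((W i).filter fun u => E u v).card : ℕ) : ℝ)
        = ∑ v ∈ W j, (((W i).filter fun u => E u v).card : ℝ) := by push_cast; rfl
    have e1 : ∑ v ∈ W j, ((w:ℝ) - (((W i).filter fun u => E u v).card : ℝ))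
        = (w:ℝ)*w - ∑ v ∈ W j, (((W i).filter fun u => E u v).card : ℝ) := by
      rw [Finset.sum_sub_distrib, Finset.sum_const, hcard j, nsmul_eq_mul]
    rw [e1, ← e2]
    exact h
  -- bad sets
  set B : Fin P → Fin P → Finset V := fun k j => (W k).filter (fun v =>
      (k < j ∧ θ < (w:ℝ) - (((W j).filter fun u => E v u).card : ℝ)) ∨
      (j < k ∧ θ < (w:ℝ) - (((W j).filter fun u => E u v).card : ℝ))) with hBdef
  have hBsub : ∀ k j, B k j ⊆ W k := fun k j => Finset.filter_subset _ _
  have hdegW : ∀ (X : Finset V) (p : V → Prop) [DecidablePred p],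
      X.card = w → (0:ℝ) ≤ (w:ℝ) - ((X.filter p).card : ℝ) := by
    intro X p _ hX
    have : (X.filter p).card ≤ w := hX ▸ Finset.card_filter_le _ _
    have : ((X.filter p).card : ℝ) ≤ (w:ℝ) := by exact_mod_cast this
    linarith
  have hBcard : ∀ k j : Fin P, ((B k j).card : ℝ) ≤ (w:ℝ)/(2*P) := by
    intro k j
    rcases lt_trichotomy k j with h | h | h
    · refine aux_bad_bound (W k) (B k j)
        (fun v => (w:ℝ) - (((W j).filter fun u => E v u).card : ℝ)) θ _
        (hBsub k j) (fun v _ => hdegW _ _ (hcard j)) ?_ hθ0 hc0 (keyOut k j h)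
      intro v hv
      rw [hBdef] at hv
      simp only [Finset.mem_filter] at hv
      rcases hv.2 with ⟨_, h2⟩ | ⟨h1, _⟩
      · exact h2
      · exact absurd h (asymm h1)
    · have : B k j = ∅ := by
        rw [hBdef]
        refine Finset.filter_eq_empty_iff.2 fun v _ => ?_
        rintro (⟨h1, _⟩ | ⟨h1, _⟩) <;> rw [h] at h1 <;> exact lt_irrefl _ h1
      rw [this]
      simpa using hc0
    · refine aux_bad_bound (W k) (B k j)
        (fun v => (w:ℝ) - (((W j).filter fun u => E u v).card : ℝ)) θ _
        (hBsub k j) (fun v _ => hdegW _ _ (hcard j)) ?_ hθ0 hc0 (keyIn j k h)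
      intro v hv
      rw [hBdef] at hv
      simp only [Finset.mem_filter] at hv
      rcases hv.2 with ⟨h1, _⟩ | ⟨_, h2⟩
      · exact absurd h (asymm h1)
      · exact h2
  -- good sets
  set U : Fin P → Finset V := fun k => Finset.univ.biUnion (B k) with hUdef
  set F : Fin P → Finset V := fun k => W k \ U k with hFdef
  have hUsub : ∀ k, U k ⊆ W k := fun k => Finset.biUnion_subset.2 fun j _ => hBsub k j
  have hFsub : ∀ k, F k ⊆ W k := fun k => Finset.sdiff_subset
  have hBkk : ∀ k, (B k k).card = 0 := by
    intro k
    rw [Finset.card_eq_zero, hBdef]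
    refine Finset.filter_eq_empty_iff.2 fun v _ => ?_
    rintro (⟨h1, _⟩ | ⟨h1, _⟩) <;> exact lt_irrefl _ h1
  have hUcard : ∀ k, ((U k).card : ℝ) ≤ ((P:ℝ) - 1) * ((w:ℝ)/(2*P)) := by
    intro k
    have h1 : (U k).card ≤ ∑ j : Fin P, (B k j).card := Finset.card_biUnion_le
    have h1' : ((U k).card : ℝ) ≤ ∑ j : Fin P, ((B k j).card : ℝ) := by
      calc ((U k).card : ℝ) ≤ ((∑ j : Fin P, (B k j).card : ℕ) : ℝ) := by exact_mod_cast h1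
        _ = ∑ j : Fin P, ((B k j).card : ℝ) := by push_cast; rfl
    have h3 : ∑ j : Fin P, ((B k j).card : ℝ)
        = ∑ j ∈ Finset.univ.erase k, ((B k j).card : ℝ) := by
      rw [← Finset.add_sum_erase _ _ (Finset.mem_univ k), hBkk k]
      simp
    have h4 : ∑ j ∈ Finset.univ.erase k, ((B k j).card : ℝ)
        ≤ ∑ _j ∈ Finset.univ.erase k, (w:ℝ)/(2*P) :=
      Finset.sum_le_sum fun j _ => hBcard k j
    have h5 : ((Finset.univ.erase k).card : ℝ) = (P:ℝ) - 1 := by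
      rw [Finset.card_erase_of_mem (Finset.mem_univ k)]
      simp only [Finset.card_univ, Fintype.card_fin]
      rw [Nat.cast_sub hP]
      simp
    rw [Finset.sum_const, nsmul_eq_mul, h5] at h4
    linarith
  have hFcard : ∀ k, (w+1)/2 ≤ (F k).card := by
    intro k
    have hcF : (F k).card = w - (U k).card := by
      rw [hFdef]
      simp only
      rw [Finset.card_sdiff_of_subset (hUsub k), hcard k]
    have hUw : (U k).card ≤ w := by rw [← hcard k]; exact Finset.card_le_card (hUsub k)
    have hr : ((F k).card : ℝ) = (w:ℝ) - ((U k).card : ℝ) := by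
      rw [hcF, Nat.cast_sub hUw]
    have hlt : (w:ℝ)/2 < ((F k).card : ℝ) := by
      rw [hr]
      have hb := hUcard k
      have h1 : (0:ℝ) < (w:ℝ)/(2*P) := by positivity
      have h2 : ((P:ℝ)-1) * ((w:ℝ)/(2*P)) < (P:ℝ) * ((w:ℝ)/(2*P)) := by nlinarith
      have h3 : (P:ℝ) * ((w:ℝ)/(2*P)) = (w:ℝ)/2 := by field_simp
      linarith
    have : w < 2 * (F k).card := by
      exact_mod_cast (by push_cast; linarith : (w:ℝ) < ((2 * (F k).card : ℕ) : ℝ))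
    omega
  choose A hAsub hAcard using fun k => Finset.exists_subset_card_eq (hFcard k)
  have hAW : ∀ k, A k ⊆ W k := fun k => (hAsub k).trans (hFsub k)
  have h2a : (w:ℝ) ≤ 2 * (((w+1)/2 : ℕ) : ℝ) := by
    exact_mod_cast (by push_cast; exact_mod_cast Nat.le_of_lt_succ (Nat.lt_succ_of_le
      (by omega)) : (w:ℝ) ≤ ((2 * ((w+1)/2) : ℕ) : ℝ))
  have haw : ((w+1)/2 : ℕ) ≤ w := by omega
  have ha1 : 1 ≤ ((w+1)/2 : ℕ) := by omega
  have ha' : (0:ℝ) < (((w+1)/2 : ℕ) : ℝ) := by exact_mod_cast ha1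
  have hlamprod : lam * (w:ℝ) ≤ lam * (2 * (((w+1)/2 : ℕ) : ℝ)) :=
    mul_le_mul_of_nonneg_left h2a hlam
  refine ⟨A, hAW, hAcard, ?_, ?_⟩
  · intro i j hij v hv
    have hvF := hAsub i hv
    have hvW : v ∈ W i := (Finset.mem_sdiff.1 hvF).1
    have hvnB : v ∉ B i j := fun h =>
      (Finset.mem_sdiff.1 hvF).2 (Finset.mem_biUnion.2 ⟨j, Finset.mem_univ j, h⟩)
    have hdeg : (w:ℝ) - (((W j).filter fun u => E v u).card : ℝ) ≤ θ := by
      by_contra hcon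
      push_neg at hcon
      refine hvnB ?_
      rw [hBdef]
      exact Finset.mem_filter.2 ⟨hvW, Or.inl ⟨hij, hcon⟩⟩
    have hsub2 : (W j).filter (fun u => E v u)
        ⊆ ((A j).filter fun u => E v u) ∪ (W j \ A j) := by
      intro u hu
      rw [Finset.mem_filter] at hu
      by_cases h : u ∈ A j
      · exact Finset.mem_union_left _ (Finset.mem_filter.2 ⟨h, hu.2⟩)
      · exact Finset.mem_union_right _ (Finset.mem_sdiff.2 ⟨hu.1, h⟩)
    have hcd : ((W j).filter fun u => E v u).card
        ≤ ((A j).filter fun u => E v u).card + (w - (w+1)/2) := by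
      calc ((W j).filter fun u => E v u).card
          ≤ (((A j).filter fun u => E v u) ∪ (W j \ A j)).card := Finset.card_le_card hsub2
        _ ≤ ((A j).filter fun u => E v u).card + (W j \ A j).card := Finset.card_union_le _ _
        _ = _ := by rw [Finset.card_sdiff_of_subset (hAW j), hcard j, hAcard j]
    have hcdR : (((W j).filter fun u => E v u).card : ℝ)
        ≤ (((A j).filter fun u => E v u).card : ℝ) + ((w:ℝ) - (((w+1)/2 : ℕ) : ℝ)) := by
      have h := hcd
      have : (((W j).filter fun u => E v u).card : ℝ)
          ≤ ((((A j).filter fun u => E v u).card + (w - (w+1)/2) : ℕ) : ℝ) := by exact_mod_cast h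
      rwa [Nat.cast_add, Nat.cast_sub haw] at this
    have hdens_eq : density E {v} (A j)
        = (((A j).filter fun u => E v u).card : ℝ) / (1 * (((w+1)/2 : ℕ) : ℝ)) := by
      rw [density, aux_card_left, Finset.sum_singleton, Finset.card_singleton, hAcard j]
      norm_num
    rw [hdens_eq, le_div_iff₀ (by positivity)]
    rw [hθdef] at hdeg
    nlinarith
  · intro i j hij v hv
    have hvF := hAsub j hv
    have hvW : v ∈ W j := (Finset.mem_sdiff.1 hvF).1
    have hvnB : v ∉ B j i := fun h =>
      (Finset.mem_sdiff.1 hvF).2 (Finset.mem_biUnion.2 ⟨i, Finset.mem_univ i, h⟩)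
    have hdeg : (w:ℝ) - (((W i).filter fun u => E u v).card : ℝ) ≤ θ := by
      by_contra hcon
      push_neg at hcon
      refine hvnB ?_
      rw [hBdef]
      exact Finset.mem_filter.2 ⟨hvW, Or.inr ⟨hij, hcon⟩⟩
    have hsub2 : (W i).filter (fun u => E u v)
        ⊆ ((A i).filter fun u => E u v) ∪ (W i \ A i) := by
      intro u hu
      rw [Finset.mem_filter] at hu
      by_cases h : u ∈ A i
      · exact Finset.mem_union_left _ (Finset.mem_filter.2 ⟨h, hu.2⟩)
      · exact Finset.mem_union_right _ (Finset.mem_sdiff.2 ⟨hu.1, h⟩)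
    have hcd : ((W i).filter fun u => E u v).card
        ≤ ((A i).filter fun u => E u v).card + (w - (w+1)/2) := by
      calc ((W i).filter fun u => E u v).card
          ≤ (((A i).filter fun u => E u v) ∪ (W i \ A i)).card := Finset.card_le_card hsub2
        _ ≤ ((A i).filter fun u => E u v).card + (W i \ A i).card := Finset.card_union_le _ _
        _ = _ := by rw [Finset.card_sdiff_of_subset (hAW i), hcard i, hAcard i]
    have hcdR : (((W i).filter fun u => E u v).card : ℝ)
        ≤ (((A i).filter fun u => E u v).card : ℝ) + ((w:ℝ) - (((w+1)/2 : ℕ) : ℝ)) := by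
      have h := hcd
      have : (((W i).filter fun u => E u v).card : ℝ)
          ≤ ((((A i).filter fun u => E u v).card + (w - (w+1)/2) : ℕ) : ℝ) := by exact_mod_cast h
      rwa [Nat.cast_add, Nat.cast_sub haw] at this
    have hdens_eq : density E (A i) {v}
        = (((A i).filter fun u => E u v).card : ℝ) / ((((w+1)/2 : ℕ) : ℝ) * 1) := by
      rw [density, aux_card_right, Finset.sum_singleton, Finset.card_singleton, hAcard i]
      norm_num
    rw [hdens_eq, le_div_iff₀ (by positivity)]
    rw [hθdef] at hdeg
    nlinarith
end

section
/- Let χ = (S_1,...,S_k) be a strong (c,λ)-structure with |S_1| = ... = |S_k| = t in a tournament T, and suppose χ is (H_j, φ_j)-normal for j = 1,...,p with the images of the φ_j pairwise disjoint. If λ < 1/((p-1)^2 · (max_j |H_j|)^2), then the tournament induced by S_1 ∪ ... ∪ S_k contains the product tournament H_1^{φ_1} ⊕ ... ⊕ H_p^{φ_p} as a subtournament. -/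
/-- A strong `(c,λ)`-structure: pairwise disjoint sets, each of size at least `c·n`,
with `d(S_i, S_j) ≥ 1 - λ` for `i < j`, and moreover every single vertex has density
at least `1 - λ` towards every later set and from every earlier set. -/
def IsStrongStruct {V : Type*} [Fintype V] (E : V → V → Prop) [DecidableRel E]
    (c lam : ℝ) {k : ℕ} (S : Fin k → Finset V) : Prop :=
  (∀ i j, i ≠ j → Disjoint (S i) (S j)) ∧
  (∀ i, c * (Fintype.card V : ℝ) ≤ ((S i).card : ℝ)) ∧
  (∀ i j, i < j → 1 - lam ≤ density E (S i) (S j)) ∧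
  (∀ i j, i < j → ∀ v ∈ S i, 1 - lam ≤ density E {v} (S j)) ∧
  (∀ i j, i < j → ∀ v ∈ S j, 1 - lam ≤ density E (S i) {v})

/-- `χ = (S_1,...,S_k)` (each set of size `t`) is `(H,φ)`-normal: for each vertex `h`
of `H` there is an ordering `(v h 0, ..., v h (t-1))` of `S (φ h)` such that for every
`s`, the vertices `v h s` (over `h ∈ V(H)`) induce a copy of `H` via `h ↦ v h s`. -/
def IsNormal {V : Type*} (E : V → V → Prop) {k : ℕ} (S : Fin k → Finset V)
    (t : ℕ) {m : ℕ} (H : Fin m → Fin m → Prop) (φ : Fin m → Fin k) : Prop :=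
  ∃ v : Fin m → Fin t → V,
    (∀ h, Function.Injective (v h)) ∧
    (∀ h s, v h s ∈ S (φ h)) ∧
    (∀ s : Fin t, ∀ a b : Fin m, a ≠ b → (H a b ↔ E (v a s) (v b s)))


lemma density_out_bound {V : Type*} (E : V → V → Prop) [DecidableRel E] (lam : ℝ) (t : ℕ)
    (ht : 0 < t) (w : V) (A : Finset V) (hA : A.card = t)
    (h : 1 - lam ≤ density E {w} A) :
    ((A.filter fun u => ¬ E w u).card : ℝ) ≤ lam * t := by
  classical
  have hprod : ({w} ×ˢ A).filter (fun p => E p.1 p.2) = {w} ×ˢ (A.filter fun u => E w u) := by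
    ext ⟨x, u⟩
    simp only [Finset.mem_filter, Finset.mem_product, Finset.mem_singleton]
    constructor
    · rintro ⟨⟨hx, hu⟩, he⟩; subst hx; exact ⟨rfl, hu, he⟩
    · rintro ⟨hx, hu, he⟩; subst hx; exact ⟨⟨rfl, hu⟩, he⟩
  have hd : density E {w} A = ((A.filter fun u => E w u).card : ℝ) / t := by
    rw [density, hprod, Finset.card_product, Finset.card_singleton, hA]
    push_cast
    rw [one_mul, one_mul]
  rw [hd] at h
  have ht' : (0:ℝ) < t := by exact_mod_cast ht
  have h1 : (1 - lam) * t ≤ ((A.filter fun u => E w u).card : ℝ) :=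
    (le_div_iff₀ ht').mp h
  have hsplit : (A.filter fun u => E w u).card + (A.filter fun u => ¬ E w u).card = t := by
    rw [Finset.card_filter_add_card_filter_not, hA]
  have h2 : ((A.filter fun u => ¬ E w u).card : ℝ)
      = (t : ℝ) - ((A.filter fun u => E w u).card : ℝ) := by
    have := hsplit
    push_cast [← this]
    ring
  linarith

lemma density_in_bound {V : Type*} (E : V → V → Prop) [DecidableRel E] (lam : ℝ) (t : ℕ)
    (ht : 0 < t) (w : V) (A : Finset V) (hA : A.card = t)
    (h : 1 - lam ≤ density E A {w}) :
    ((A.filter fun u => ¬ E u w).card : ℝ) ≤ lam * t := by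
  classical
  have hprod : (A ×ˢ {w}).filter (fun p => E p.1 p.2) = (A.filter fun u => E u w) ×ˢ {w} := by
    ext ⟨u, x⟩
    simp only [Finset.mem_filter, Finset.mem_product, Finset.mem_singleton]
    constructor
    · rintro ⟨⟨hu, hx⟩, he⟩; subst hx; exact ⟨⟨hu, he⟩, rfl⟩
    · rintro ⟨⟨hu, he⟩, hx⟩; subst hx; exact ⟨⟨hu, rfl⟩, he⟩
  have hd : density E A {w} = ((A.filter fun u => E u w).card : ℝ) / t := by
    rw [density, hprod, Finset.card_product, Finset.card_singleton, hA]
    push_cast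
    rw [mul_one, mul_one]
  rw [hd] at h
  have ht' : (0:ℝ) < t := by exact_mod_cast ht
  have h1 : (1 - lam) * t ≤ ((A.filter fun u => E u w).card : ℝ) :=
    (le_div_iff₀ ht').mp h
  have hsplit : (A.filter fun u => E u w).card + (A.filter fun u => ¬ E u w).card = t := by
    rw [Finset.card_filter_add_card_filter_not, hA]
  have h2 : ((A.filter fun u => ¬ E u w).card : ℝ)
      = (t : ℝ) - ((A.filter fun u => E u w).card : ℝ) := by
    have := hsplit
    push_cast [← this]
    ring
  linarith


/-- If a strong `(c,λ)`-structure with equal part sizes `t` is `(H_j, φ_j)`-normal for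
`j = 1,...,p` with pairwise disjoint images of the `φ_j`, and
`λ < 1/((p-1)²·(max_j |H_j|)²)`, then the tournament induced by `S_1 ∪ ... ∪ S_k`
contains the product tournament `H_1^{φ_1} ⊕ ... ⊕ H_p^{φ_p}`: there are vertices
`g j a ∈ S_1 ∪ ... ∪ S_k`, all distinct, inducing each `H_j` on its factor and with
all edges between different factors directed according to the combined ordering. -/
theorem stmt17 {V : Type*} [Fintype V] (E : V → V → Prop) [DecidableRel E]
    (hT : IsTournament E) (c lam : ℝ) {k : ℕ} (S : Fin k → Finset V)
    (hS : IsStrongStruct E c lam S) (t : ℕ) (ht : 0 < t)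
    (hcard : ∀ i, (S i).card = t)
    (p : ℕ) (m : Fin p → ℕ) (H : ∀ j, Fin (m j) → Fin (m j) → Prop)
    (hHt : ∀ j, IsTournament (H j))
    (φ : ∀ j, Fin (m j) → Fin k) (hφinj : ∀ j, Function.Injective (φ j))
    (hφdisj : ∀ j j', j ≠ j' → ∀ a a', φ j a ≠ φ j' a')
    (hnorm : ∀ j, IsNormal E S t (H j) (φ j))
    (hlam : lam < 1 / (((p : ℝ) - 1) ^ 2 * ((Finset.univ.sup m : ℕ) : ℝ) ^ 2)) :
    ∃ g : (j : Fin p) → Fin (m j) → V,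
      (∀ j a, ∃ i, g j a ∈ S i) ∧
      Function.Injective (fun x : Σ j, Fin (m j) => g x.1 x.2) ∧
      (∀ j, ∀ a b, a ≠ b → (H j a b ↔ E (g j a) (g j b))) ∧
      (∀ j j', j ≠ j' → ∀ a a', φ j a < φ j' a' → E (g j a) (g j' a')) := by
    classical
  choose v hvinj hvmem hvcopy using hnorm
  set M : ℕ := Finset.univ.sup m with hM
  -- per-pair bound on bad choices
  have pairBound : ∀ (j' j₀ : Fin p), j' ≠ j₀ → ∀ (y : Fin t) (a : Fin (m j')) (a' : Fin (m j₀)),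
      ((Finset.univ.filter fun x : Fin t =>
        (φ j' a < φ j₀ a' ∧ ¬ E (v j' a y) (v j₀ a' x)) ∨
        (φ j₀ a' < φ j' a ∧ ¬ E (v j₀ a' x) (v j' a y))).card : ℝ) ≤ lam * t := by
    intro j' j₀ hne y a a'
    rcases lt_trichotomy (φ j' a) (φ j₀ a') with hlt | heq | hgt
    · have heqf : (Finset.univ.filter fun x : Fin t =>
          (φ j' a < φ j₀ a' ∧ ¬ E (v j' a y) (v j₀ a' x)) ∨
          (φ j₀ a' < φ j' a ∧ ¬ E (v j₀ a' x) (v j' a y))) =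
          Finset.univ.filter fun x : Fin t => ¬ E (v j' a y) (v j₀ a' x) := by
        ext x
        simp only [Finset.mem_filter, Finset.mem_univ, true_and]
        constructor
        · rintro (⟨_, h⟩ | ⟨hgt', _⟩)
          · exact h
          · exact absurd hlt (asymm hgt')
        · intro h; exact Or.inl ⟨hlt, h⟩
      rw [heqf]
      have hsub : (Finset.univ.filter fun x : Fin t => ¬ E (v j' a y) (v j₀ a' x)).card
          ≤ ((S (φ j₀ a')).filter fun u => ¬ E (v j' a y) u).card := by
        apply Finset.card_le_card_of_injOn (fun x => v j₀ a' x)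
        · intro x hx
          simp only [Finset.mem_coe, Finset.mem_filter, Finset.mem_univ, true_and] at hx ⊢
          exact ⟨hvmem j₀ a' x, hx⟩
        · intro x _ x' _ hxe
          exact hvinj j₀ a' hxe
      calc ((Finset.univ.filter fun x : Fin t => ¬ E (v j' a y) (v j₀ a' x)).card : ℝ)
          ≤ (((S (φ j₀ a')).filter fun u => ¬ E (v j' a y) u).card : ℝ) := by exact_mod_cast hsub
        _ ≤ lam * t := density_out_bound E lam t ht (v j' a y) (S (φ j₀ a')) (hcard _)
            (hS.2.2.2.1 _ _ hlt _ (hvmem j' a y))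
    · exact absurd heq (hφdisj j' j₀ hne a a')
    · have heqf : (Finset.univ.filter fun x : Fin t =>
          (φ j' a < φ j₀ a' ∧ ¬ E (v j' a y) (v j₀ a' x)) ∨
          (φ j₀ a' < φ j' a ∧ ¬ E (v j₀ a' x) (v j' a y))) =
          Finset.univ.filter fun x : Fin t => ¬ E (v j₀ a' x) (v j' a y) := by
        ext x
        simp only [Finset.mem_filter, Finset.mem_univ, true_and]
        constructor
        · rintro (⟨hlt', _⟩ | ⟨_, h⟩)
          · exact absurd hgt (asymm hlt')
          · exact h
        · intro h; exact Or.inr ⟨hgt, h⟩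
      rw [heqf]
      have hsub : (Finset.univ.filter fun x : Fin t => ¬ E (v j₀ a' x) (v j' a y)).card
          ≤ ((S (φ j₀ a')).filter fun u => ¬ E u (v j' a y)).card := by
        apply Finset.card_le_card_of_injOn (fun x => v j₀ a' x)
        · intro x hx
          simp only [Finset.mem_coe, Finset.mem_filter, Finset.mem_univ, true_and] at hx ⊢
          exact ⟨hvmem j₀ a' x, hx⟩
        · intro x _ x' _ hxe
          exact hvinj j₀ a' hxe
      calc ((Finset.univ.filter fun x : Fin t => ¬ E (v j₀ a' x) (v j' a y)).card : ℝ)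
          ≤ (((S (φ j₀ a')).filter fun u => ¬ E u (v j' a y)).card : ℝ) := by exact_mod_cast hsub
        _ ≤ lam * t := density_in_bound E lam t ht (v j' a y) (S (φ j₀ a')) (hcard _)
            (hS.2.2.2.2 _ _ hgt _ (hvmem j' a y))
  -- greedy construction of compatible indices
  have key : ∀ n, n ≤ p → ∃ s : Fin p → Fin t, ∀ (j j' : Fin p), j.val < j'.val → j'.val < n →
      ∀ (a : Fin (m j)) (a' : Fin (m j')),
        (φ j a < φ j' a' → E (v j a (s j)) (v j' a' (s j'))) ∧
        (φ j' a' < φ j a → E (v j' a' (s j')) (v j a (s j))) := by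
    intro n
    induction n with
    | zero =>
      intro _
      exact ⟨fun _ => ⟨0, ht⟩, fun j j' _ h => absurd h (Nat.not_lt_zero _)⟩
    | succ n ih =>
      intro hn
      obtain ⟨s, hs⟩ := ih (Nat.le_of_succ_le hn)
      set j₀ : Fin p := ⟨n, hn⟩ with hj₀
      -- the set of bad choices for position j₀
      set Bad : Finset (Fin t) :=
        (Finset.univ.filter fun j' : Fin p => j'.val < n).biUnion
          (fun j' => Finset.univ.filter fun x : Fin t =>
            ¬ ∀ (a : Fin (m j')) (a' : Fin (m j₀)),
              (φ j' a < φ j₀ a' → E (v j' a (s j')) (v j₀ a' x)) ∧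
              (φ j₀ a' < φ j' a → E (v j₀ a' x) (v j' a (s j')))) with hBad
      have hBadcard : (Bad.card : ℝ) < t := by
        set prev := Finset.univ.filter fun j' : Fin p => j'.val < n with hprev
        have step1 : (Bad.card : ℝ) ≤ ∑ j' ∈ prev, ((Finset.univ.filter fun x : Fin t =>
            ¬ ∀ (a : Fin (m j')) (a' : Fin (m j₀)),
              (φ j' a < φ j₀ a' → E (v j' a (s j')) (v j₀ a' x)) ∧
              (φ j₀ a' < φ j' a → E (v j₀ a' x) (v j' a (s j')))).card : ℝ) := by
          rw [hBad]
          push_cast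
          exact_mod_cast Nat.cast_le.mpr (Finset.card_biUnion_le)
        have step2 : ∀ j' ∈ prev, ((Finset.univ.filter fun x : Fin t =>
            ¬ ∀ (a : Fin (m j')) (a' : Fin (m j₀)),
              (φ j' a < φ j₀ a' → E (v j' a (s j')) (v j₀ a' x)) ∧
              (φ j₀ a' < φ j' a → E (v j₀ a' x) (v j' a (s j')))).card : ℝ)
            ≤ ((m j' * m j₀ : ℕ) : ℝ) * (lam * t) := by
          intro j' hj'
          have hj'lt : j'.val < n := by
            simpa [hprev] using hj'
          have hne : j' ≠ j₀ := by
            intro hcon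
            rw [hcon] at hj'lt
            exact absurd hj'lt (lt_irrefl n)
          have hsub : (Finset.univ.filter fun x : Fin t =>
              ¬ ∀ (a : Fin (m j')) (a' : Fin (m j₀)),
                (φ j' a < φ j₀ a' → E (v j' a (s j')) (v j₀ a' x)) ∧
                (φ j₀ a' < φ j' a → E (v j₀ a' x) (v j' a (s j')))) ⊆
              (Finset.univ : Finset (Fin (m j') × Fin (m j₀))).biUnion (fun q =>
                Finset.univ.filter fun x : Fin t =>
                  (φ j' q.1 < φ j₀ q.2 ∧ ¬ E (v j' q.1 (s j')) (v j₀ q.2 x)) ∨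
                  (φ j₀ q.2 < φ j' q.1 ∧ ¬ E (v j₀ q.2 x) (v j' q.1 (s j')))) := by
            intro x hx
            simp only [Finset.mem_filter, Finset.mem_univ, true_and] at hx
            obtain ⟨a, ha⟩ := not_forall.mp hx
            obtain ⟨a', ha'⟩ := not_forall.mp ha
            rw [Finset.mem_biUnion]
            refine ⟨(a, a'), Finset.mem_univ _, ?_⟩
            simp only [Finset.mem_filter, Finset.mem_univ, true_and]
            rcases not_and_or.mp ha' with h | h
            · obtain ⟨hh, he⟩ := _root_.not_imp.mp h
              exact Or.inl ⟨hh, he⟩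
            · obtain ⟨hh, he⟩ := _root_.not_imp.mp h
              exact Or.inr ⟨hh, he⟩
          have hcount : ((Finset.univ.filter fun x : Fin t =>
              ¬ ∀ (a : Fin (m j')) (a' : Fin (m j₀)),
                (φ j' a < φ j₀ a' → E (v j' a (s j')) (v j₀ a' x)) ∧
                (φ j₀ a' < φ j' a → E (v j₀ a' x) (v j' a (s j')))).card : ℝ)
              ≤ ∑ q ∈ (Finset.univ : Finset (Fin (m j') × Fin (m j₀))),
                  ((Finset.univ.filter fun x : Fin t =>
                  (φ j' q.1 < φ j₀ q.2 ∧ ¬ E (v j' q.1 (s j')) (v j₀ q.2 x)) ∨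
                  (φ j₀ q.2 < φ j' q.1 ∧ ¬ E (v j₀ q.2 x) (v j' q.1 (s j')))).card : ℝ) := by
            have h1 := Finset.card_le_card hsub
            have h2 := Finset.card_biUnion_le (s := (Finset.univ : Finset (Fin (m j') × Fin (m j₀))))
              (t := fun q => Finset.univ.filter fun x : Fin t =>
                  (φ j' q.1 < φ j₀ q.2 ∧ ¬ E (v j' q.1 (s j')) (v j₀ q.2 x)) ∨
                  (φ j₀ q.2 < φ j' q.1 ∧ ¬ E (v j₀ q.2 x) (v j' q.1 (s j'))))
            have := le_trans h1 h2
            push_cast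
            exact_mod_cast this
          calc _ ≤ _ := hcount
            _ ≤ ∑ _q ∈ (Finset.univ : Finset (Fin (m j') × Fin (m j₀))), lam * t :=
              Finset.sum_le_sum (fun q _ => pairBound j' j₀ hne (s j') q.1 q.2)
            _ = ((m j' * m j₀ : ℕ) : ℝ) * (lam * t) := by
              rw [Finset.sum_const, Finset.card_univ, Fintype.card_prod, Fintype.card_fin,
                Fintype.card_fin, nsmul_eq_mul]
              try push_cast
              try ring
        have step3 : (Bad.card : ℝ) ≤ ((∑ j' ∈ prev, m j' * m j₀ : ℕ) : ℝ) * (lam * t) := by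
          calc (Bad.card : ℝ) ≤ _ := step1
            _ ≤ ∑ j' ∈ prev, ((m j' * m j₀ : ℕ) : ℝ) * (lam * t) := Finset.sum_le_sum step2
            _ = ((∑ j' ∈ prev, m j' * m j₀ : ℕ) : ℝ) * (lam * t) := by
              rw [← Finset.sum_mul]
              push_cast
              ring
        set N : ℕ := ∑ j' ∈ prev, m j' * m j₀ with hN
        have hNle : N ≤ (p - 1) * (M * M) := by
          calc N ≤ ∑ _j' ∈ prev, M * M :=
              Finset.sum_le_sum (fun j' _ => Nat.mul_le_mul
                (Finset.le_sup (Finset.mem_univ j')) (Finset.le_sup (Finset.mem_univ j₀)))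
            _ = prev.card * (M * M) := by rw [Finset.sum_const, smul_eq_mul]
            _ ≤ (p - 1) * (M * M) := by
              apply Nat.mul_le_mul_right
              have hsub2 : prev ⊆ Finset.univ.erase j₀ := by
                intro j' hj'
                simp only [hprev, Finset.mem_filter, Finset.mem_univ, true_and] at hj'
                apply Finset.mem_erase.mpr
                refine ⟨?_, Finset.mem_univ _⟩
                intro hcon
                rw [hcon] at hj'
                exact absurd hj' (lt_irrefl n)
              have := Finset.card_le_card hsub2
              rwa [Finset.card_erase_of_mem (Finset.mem_univ _), Finset.card_univ,
                Fintype.card_fin] at this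
        have ht' : (0:ℝ) < t := by exact_mod_cast ht
        have hmain : ((N : ℕ) : ℝ) * lam < 1 := by
          rcases le_or_gt lam 0 with hl | hl
          · have : ((N : ℕ) : ℝ) * lam ≤ 0 :=
              mul_nonpos_of_nonneg_of_nonpos (Nat.cast_nonneg _) hl
            linarith
          · have hD0 : (0:ℝ) ≤ ((p : ℝ) - 1) ^ 2 * ((M : ℕ) : ℝ) ^ 2 := by positivity
            rcases hD0.eq_or_lt with hDz | hD
            · rw [← hDz] at hlam
              simp at hlam
              linarith
            · have hlam' : lam * (((p : ℝ) - 1) ^ 2 * ((M : ℕ) : ℝ) ^ 2) < 1 :=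
                (lt_div_iff₀ hD).mp hlam
              rcases Nat.eq_zero_or_pos N with hN0 | hNpos
              · rw [hN0]; norm_num
              · -- N ≥ 1, hence p ≥ 2 and M ≥ 1
                have hpM : 1 ≤ (p - 1) * (M * M) := le_trans hNpos hNle
                have hp2 : 2 ≤ p := by
                  have hne0 : p - 1 ≠ 0 := by
                    intro h0
                    rw [h0] at hpM
                    simp at hpM
                  omega
                have hM1 : 1 ≤ M := by
                  rcases Nat.eq_zero_or_pos M with h | h
                  · rw [h] at hpM; simp at hpM
                  · exact h
                have hq : (1:ℝ) ≤ (p : ℝ) - 1 := by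
                  have : (2:ℝ) ≤ (p:ℝ) := by exact_mod_cast hp2
                  linarith
                have hMr : (1:ℝ) ≤ ((M : ℕ) : ℝ) := by exact_mod_cast hM1
                have hNr : ((N : ℕ) : ℝ) ≤ ((p:ℝ) - 1) * (((M : ℕ) : ℝ) * ((M : ℕ) : ℝ)) := by
                  have h1 : ((N : ℕ) : ℝ) ≤ (((p - 1) * (M * M) : ℕ) : ℝ) := by
                    exact_mod_cast hNle
                  have h2 : (((p - 1) * (M * M) : ℕ) : ℝ)
                      = ((p:ℝ) - 1) * (((M : ℕ) : ℝ) * ((M : ℕ) : ℝ)) := by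
                    have hp1 : 1 ≤ p := le_trans one_le_two hp2
                    push_cast [Nat.cast_sub hp1]
                    ring
                  linarith [h2 ▸ h1]
                nlinarith [mul_le_mul_of_nonneg_right hNr hl.le,
                  mul_pos hl (mul_pos (lt_of_lt_of_le one_pos hq)
                    (mul_pos (lt_of_lt_of_le one_pos hMr) (lt_of_lt_of_le one_pos hMr)))]
        calc (Bad.card : ℝ) ≤ ((N : ℕ) : ℝ) * (lam * t) := step3
          _ = (((N : ℕ) : ℝ) * lam) * t := by ring
          _ < 1 * t := by
            apply mul_lt_mul_of_pos_right hmain ht'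
          _ = t := one_mul _
      -- pick a good index for j₀
      have hexists : ∃ x : Fin t, x ∉ Bad := by
        by_contra hno
        push_neg at hno
        have hsub : (Finset.univ : Finset (Fin t)) ⊆ Bad := fun x _ => hno x
        have := Finset.card_le_card hsub
        rw [Finset.card_univ, Fintype.card_fin] at this
        have hlt : Bad.card < t := by exact_mod_cast hBadcard
        omega
      obtain ⟨x₀, hx₀⟩ := hexists
      have hx₀good : ∀ j' : Fin p, j'.val < n →
          ∀ (a : Fin (m j')) (a' : Fin (m j₀)),
            (φ j' a < φ j₀ a' → E (v j' a (s j')) (v j₀ a' x₀)) ∧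
            (φ j₀ a' < φ j' a → E (v j₀ a' x₀) (v j' a (s j'))) := by
        intro j' hj'
        by_contra hcon
        apply hx₀
        rw [hBad, Finset.mem_biUnion]
        refine ⟨j', ?_, ?_⟩
        · simp [hj']
        · simp only [Finset.mem_filter, Finset.mem_univ, true_and]
          exact hcon
      refine ⟨Function.update s j₀ x₀, ?_⟩
      intro j j' hjj' hj'n a a'
      rcases Nat.lt_or_ge j'.val n with hlt | hge
      · have hjne : j ≠ j₀ := by
          intro hcon; rw [hcon] at hjj'; simp only [hj₀] at hjj'; omega
        have hj'ne : j' ≠ j₀ := by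
          intro hcon; rw [hcon] at hlt; simp only [hj₀] at hlt; omega
        rw [Function.update_of_ne hjne, Function.update_of_ne hj'ne]
        exact hs j j' hjj' hlt a a'
      · have hj'eq : j' = j₀ := by
          apply Fin.ext
          simp only [hj₀]
          omega
        have hjlt : j.val < n := by
          have h0 := hjj'
          rw [hj'eq] at h0
          simpa [hj₀] using h0
        subst hj'eq
        have hjne : j ≠ j₀ := by
          intro hcon
          rw [hcon] at hjlt
          simp only [hj₀] at hjlt
          omega
        rw [Function.update_of_ne hjne, Function.update_self]
        exact hx₀good j hjlt a a'
  obtain ⟨s, hs⟩ := key p le_rfl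
  refine ⟨fun j a => v j a (s j), ?_, ?_, ?_, ?_⟩
  · intro j a
    exact ⟨φ j a, hvmem j a (s j)⟩
  · rintro ⟨j, a⟩ ⟨j', a'⟩ heq
    simp only at heq
    have hmem1 : v j a (s j) ∈ S (φ j a) := hvmem j a (s j)
    have hmem2 : v j' a' (s j') ∈ S (φ j' a') := hvmem j' a' (s j')
    have hφeq : φ j a = φ j' a' := by
      by_contra hne
      have hdisj := hS.1 _ _ hne
      exact Finset.disjoint_left.mp hdisj hmem1 (heq ▸ hmem2)
    rcases eq_or_ne j j' with hje | hje
    · subst hje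
      have : a = a' := hφinj j hφeq
      subst this
      rfl
    · exact absurd hφeq (hφdisj j j' hje a a')
  · intro j a b hab
    exact hvcopy j (s j) a b hab
  · intro j j' hne a a' hlt
    have hvne : j.val ≠ j'.val := fun hcon => hne (Fin.ext hcon)
    rcases Nat.lt_or_ge j.val j'.val with h | h
    · exact (hs j j' h j'.isLt a a').1 hlt
    · have h' : j'.val < j.val := by omega
      exact (hs j' j h' j.isLt a' a).2 hlt
end

section
/- Let H be a tournament obtained from tournaments H_1, H_2 by substitution (replacing a vertex v of H_1 by a copy of H_2, with every vertex of H_2 inheriting the adjacencies of v). If H_1 and H_2 both have the Erdős–Hajnal property, then H has the Erdős–Hajnal property. -/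
/-- A set of vertices induces a transitive subtournament. -/
def IsTransitiveOn {V : Type*} (E : V → V → Prop) (S : Finset V) : Prop :=
  ∀ u ∈ S, ∀ v ∈ S, ∀ w ∈ S, E u v → E v w → E u w

/-- `H` embeds into `T` (i.e. `T` contains a copy of `H` as a subtournament). -/
def Embeds {W V : Type*} (H : W → W → Prop) (T : V → V → Prop) : Prop :=
  ∃ f : W → V, Function.Injective f ∧ ∀ u v : W, H u v → T (f u) (f v)

/-- `H` has the Erdős–Hajnal property with constant `c`: every `H`-free tournament `T`
contains a transitive subtournament of order at least `|T|^c`. -/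
def EHWith {W : Type*} (H : W → W → Prop) (c : ℝ) : Prop :=
  ∀ (V : Type) [Fintype V] (T : V → V → Prop), IsTournament T → ¬ Embeds H T →
    ∃ S : Finset V, IsTransitiveOn T S ∧ (Fintype.card V : ℝ) ^ c ≤ (S.card : ℝ)

/-- `H` has the Erdős–Hajnal property. -/
def HasEH {W : Type*} (H : W → W → Prop) : Prop :=
  ∃ c : ℝ, 0 < c ∧ EHWith H c

/-- The substitution of the tournament `H2` for the vertex `v` of the tournament `H1`:
the vertex set is `(V(H1) \ {v}) ⊕ V(H2)`, edges inside each part are inherited, and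
each vertex of `H2` inherits the adjacencies of `v`. -/
def Subst {W1 W2 : Type*} (H1 : W1 → W1 → Prop) (H2 : W2 → W2 → Prop) (v : W1) :
    ({u : W1 // u ≠ v} ⊕ W2) → ({u : W1 // u ≠ v} ⊕ W2) → Prop
  | Sum.inl a, Sum.inl b => H1 a.1 b.1
  | Sum.inl a, Sum.inr _ => H1 a.1 v
  | Sum.inr _, Sum.inl b => H1 v b.1
  | Sum.inr a, Sum.inr b => H2 a b

private lemma restrict_tournament {V : Type*} {T : V → V → Prop} (hT : IsTournament T)
    (X : Finset V) : IsTournament (fun a b : {x // x ∈ X} => T a.1 b.1) :=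
  ⟨fun a => hT.1 a.1, fun a b hab => hT.2 a.1 b.1 (fun h => hab (Subtype.ext h))⟩

private lemma image_transitive {V : Type*} [DecidableEq V] {T : V → V → Prop} {X : Finset V}
    {S : Finset {x // x ∈ X}}
    (h : IsTransitiveOn (fun a b : {x // x ∈ X} => T a.1 b.1) S) :
    IsTransitiveOn T (S.image Subtype.val) := by
  intro u hu v hv w hw huv hvw
  simp only [Finset.mem_image] at hu hv hw
  obtain ⟨a, ha, rfl⟩ := hu
  obtain ⟨b, hb, rfl⟩ := hv
  obtain ⟨c, hc, rfl⟩ := hw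
  exact h a ha b hb c hc huv hvw

private lemma pair_transitive {V : Type*} [DecidableEq V] {T : V → V → Prop}
    (hT : IsTournament T) (a b : V) : IsTransitiveOn T {a, b} := by
  intro u hu v hv w hw huv hvw
  simp only [Finset.mem_insert, Finset.mem_singleton] at hu hv hw
  by_cases huv' : u = v
  · exact absurd (huv' ▸ huv) (hT.1 v)
  by_cases hvw' : v = w
  · exact absurd (hvw' ▸ hvw) (hT.1 w)
  by_cases huw : u = w
  · subst huw
    exact absurd hvw ((hT.2 u v huv').mp huv)
  · rcases hu with rfl | rfl <;> rcases hv with rfl | rfl <;> rcases hw with rfl | rfl <;>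
      first
        | exact absurd rfl huv'
        | exact absurd rfl hvw'
        | exact absurd rfl huw

private lemma ehwith_restrict {W : Type} {H : W → W → Prop} {c : ℝ} (hE : EHWith H c)
    {V : Type} [Fintype V] [DecidableEq V] {T : V → V → Prop} (hT : IsTournament T) (X : Finset V)
    (hfree : ¬ Embeds H (fun a b : {x // x ∈ X} => T a.1 b.1)) :
    ∃ S : Finset V, IsTransitiveOn T S ∧ ((X.card : ℝ)) ^ c ≤ (S.card : ℝ) := by
  obtain ⟨S', hS', hcard⟩ := hE {x // x ∈ X} (fun a b => T a.1 b.1)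
    (restrict_tournament hT X) hfree
  refine ⟨S'.image Subtype.val, image_transitive hS', ?_⟩
  rw [Finset.card_image_of_injective _ Subtype.val_injective]
  simpa [Fintype.card_coe] using hcard

private lemma count_supersets {V : Type} [Fintype V] [DecidableEq V] (R : Finset V) (m : ℕ)
    (hkm : R.card ≤ m) :
    ((Finset.powersetCard m (Finset.univ : Finset V)).filter (fun U => R ⊆ U)).card
      = (Fintype.card V - R.card).choose (m - R.card) := by
  have key : ((Finset.powersetCard m (Finset.univ : Finset V)).filter (fun U => R ⊆ U)).card
      = (Finset.powersetCard (m - R.card) (Finset.univ \ R)).card := by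
    apply Finset.card_bij' (fun U _ => U \ R) (fun W _ => W ∪ R)
    · intro U hU
      rw [Finset.mem_filter, Finset.mem_powersetCard] at hU
      rw [Finset.mem_powersetCard]
      exact ⟨Finset.sdiff_subset_sdiff hU.1.1 le_rfl,
        by rw [Finset.card_sdiff_of_subset hU.2, hU.1.2]⟩
    · intro W hW
      rw [Finset.mem_powersetCard] at hW
      have hdisj : Disjoint W R := (Finset.subset_sdiff.mp hW.1).2
      rw [Finset.mem_filter, Finset.mem_powersetCard]
      refine ⟨⟨Finset.subset_univ _, ?_⟩, Finset.subset_union_right⟩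
      rw [Finset.card_union_of_disjoint hdisj, hW.2]
      omega
    · intro U hU
      rw [Finset.mem_filter] at hU
      exact Finset.sdiff_union_of_subset hU.2
    · intro W hW
      rw [Finset.mem_powersetCard] at hW
      have hdisj : Disjoint W R := (Finset.subset_sdiff.mp hW.1).2
      rw [Finset.union_sdiff_cancel_right hdisj]
  rw [key, Finset.card_powersetCard, Finset.card_univ_diff]

private lemma exists_free_subset {W : Type} [Fintype W] {V : Type} [Fintype V] [DecidableEq V]
    (C : Finset (W → V)) (hC : ∀ f ∈ C, Function.Injective f) (m : ℕ)
    (hkm : Fintype.card W ≤ m) (hmn : m ≤ Fintype.card V)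
    (hcount : C.card * m.choose (Fintype.card W) < (Fintype.card V).choose (Fintype.card W)) :
    ∃ U : Finset V, U.card = m ∧ ∀ f ∈ C, ¬ ∀ w, f w ∈ U := by
  classical
  set k := Fintype.card W with hk
  set n := Fintype.card V with hn
  set P := Finset.powersetCard m (Finset.univ : Finset V) with hP
  set bad := P.filter (fun U => ∃ f ∈ C, ∀ w, f w ∈ U) with hbad
  have hPcard : P.card = n.choose m := by
    rw [hP, Finset.card_powersetCard, Finset.card_univ]
  have hsub : bad ⊆ C.biUnion (fun f => P.filter (fun U => ∀ w, f w ∈ U)) := by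
    intro U hU
    rw [hbad, Finset.mem_filter] at hU
    obtain ⟨hUP, f, hf, hfw⟩ := hU
    exact Finset.mem_biUnion.mpr ⟨f, hf, Finset.mem_filter.mpr ⟨hUP, hfw⟩⟩
  have hfib : ∀ f ∈ C, (P.filter (fun U => ∀ w, f w ∈ U)).card
      = (n - k).choose (m - k) := by
    intro f hf
    have hinj := hC f hf
    have hRcard : (Finset.univ.image f).card = k := by
      rw [Finset.card_image_of_injective _ hinj, Finset.card_univ]
    have heq : ∀ U : Finset V, (∀ w, f w ∈ U) ↔ Finset.univ.image f ⊆ U := by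
      intro U
      constructor
      · intro h x hx
        obtain ⟨w, _, rfl⟩ := Finset.mem_image.mp hx
        exact h w
      · intro h w
        exact h (Finset.mem_image.mpr ⟨w, Finset.mem_univ w, rfl⟩)
    calc (P.filter (fun U => ∀ w, f w ∈ U)).card
        = (P.filter (fun U => Finset.univ.image f ⊆ U)).card := by
          congr 1; apply Finset.filter_congr; intro U _; simp [heq U]
      _ = (n - k).choose (m - k) := by
          rw [count_supersets _ m (hRcard ▸ hkm), hRcard]
  have hbadcard : bad.card ≤ C.card * ((n - k).choose (m - k)) := by
    calc bad.card ≤ (C.biUnion (fun f => P.filter (fun U => ∀ w, f w ∈ U))).card :=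
          Finset.card_le_card hsub
      _ ≤ ∑ f ∈ C, (P.filter (fun U => ∀ w, f w ∈ U)).card := Finset.card_biUnion_le
      _ = ∑ _f ∈ C, (n - k).choose (m - k) := Finset.sum_congr rfl hfib
      _ = C.card * ((n - k).choose (m - k)) := by rw [Finset.sum_const, smul_eq_mul]
  have hlt : C.card * ((n - k).choose (m - k)) < n.choose m := by
    have hid : n.choose m * m.choose k = n.choose k * (n - k).choose (m - k) :=
      Nat.choose_mul hkm
    have hpos : 0 < (n - k).choose (m - k) :=
      Nat.choose_pos (Nat.sub_le_sub_right hmn k)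
    have hpos2 : 0 < m.choose k := Nat.choose_pos hkm
    have h2 : C.card * ((n - k).choose (m - k)) * m.choose k
        < n.choose m * m.choose k := by
      rw [hid]
      calc C.card * ((n - k).choose (m - k)) * m.choose k
          = (C.card * m.choose k) * ((n - k).choose (m - k)) := by ring
        _ < n.choose k * ((n - k).choose (m - k)) :=
            (Nat.mul_lt_mul_right hpos).mpr hcount
    exact Nat.lt_of_mul_lt_mul_right h2
  have hex : ∃ U ∈ P, U ∉ bad := by
    by_contra hcon
    push_neg at hcon
    have : P ⊆ bad := fun U hU => hcon U hU
    have := Finset.card_le_card this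
    omega
  obtain ⟨U, hUP, hUbad⟩ := hex
  rw [hP, Finset.mem_powersetCard] at hUP
  refine ⟨U, hUP.2, ?_⟩
  intro f hf hfw
  exact hUbad (Finset.mem_filter.mpr ⟨Finset.mem_powersetCard.mpr hUP, f, hf, hfw⟩)

set_option maxHeartbeats 1000000 in
/-- If tournaments `H1` and `H2` have the Erdős–Hajnal property, then so does the
tournament obtained from `H1` by substituting `H2` for a vertex `v`. -/
theorem stmt19 {W1 W2 : Type} (H1 : W1 → W1 → Prop) (H2 : W2 → W2 → Prop)
    (h1T : IsTournament H1) (h2T : IsTournament H2) (v : W1)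
    (h1 : HasEH H1) (h2 : HasEH H2) : HasEH (Subst H1 H2 v) := by
  classical
  obtain ⟨c1, hc1, hE1⟩ := h1
  obtain ⟨c2, hc2, hE2⟩ := h2
  by_cases hfin : Finite W1
  swap
  · -- W1 infinite : every finite tournament is H1-free
    refine ⟨c1, hc1, ?_⟩
    intro V _ T hT _
    apply hE1 V T hT
    rintro ⟨f, hfinj, -⟩
    exact hfin (Finite.of_injective f hfinj)
  haveI : Fintype W1 := Fintype.ofFinite W1
  set k := Fintype.card W1 with hk
  by_cases hk1 : k ≤ 1
  · -- |W1| = 1 : H-free implies H2-free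
    refine ⟨c2, hc2, ?_⟩
    intro V _ T hT hfree
    apply hE2 V T hT
    rintro ⟨f, hfinj, hfedge⟩
    have hall : ∀ u : W1, u = v := fun u => Fintype.card_le_one_iff.mp hk1 u v
    refine hfree ⟨Sum.elim (fun a => absurd (hall a.1) a.2) f, ?_, ?_⟩
    · rintro (a | w) (b | w') h
      · exact absurd (hall a.1) a.2
      · exact absurd (hall a.1) a.2
      · exact absurd (hall b.1) b.2
      · exact congrArg Sum.inr (hfinj h)
    · rintro (a | w) (b | w') h
      · exact absurd (hall a.1) a.2
      · exact absurd (hall a.1) a.2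
      · exact absurd (hall b.1) b.2
      · exact hfedge w w' h
  -- main case : 2 ≤ k
  push_neg at hk1
  have hk2 : 2 ≤ k := hk1
  have hkpos : 0 < k := by omega
  set e := Fintype.card {u : W1 // u ≠ v} with he
  have hek : e + 1 = k := by
    have h := Fintype.card_congr (Equiv.sumCompl (fun u : W1 => u = v))
    rw [Fintype.card_sum, Fintype.card_subtype_eq] at h
    have h2 : Fintype.card {a : W1 // ¬ a = v} = e :=
      Fintype.card_congr (Equiv.subtypeEquivRight (fun _ => Iff.rfl))
    rw [hk, ← h, h2]
    omega
  set D : ℕ := k.factorial * 2 ^ k with hD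
  have hD1 : 1 ≤ D := Nat.one_le_iff_ne_zero.mpr (by positivity)
  set A : ℕ := 2 * D * (k + 1) with hA
  have hA2 : 2 ≤ A := by
    have : 1 * 1 ≤ D * (k + 1) := Nat.mul_le_mul hD1 (by omega)
    calc 2 = 2 * (1 * 1) := by norm_num
      _ ≤ 2 * (D * (k + 1)) := Nat.mul_le_mul_left 2 this
      _ = A := by rw [hA]; ring
  set n0 : ℕ := A ^ (4 * k) + 2 * k with hn0
  have hn0_2 : 2 ≤ n0 := by
    have : 4 ≤ 2 * k := by omega
    omega
  have h1n0 : (1 : ℝ) < (n0 : ℝ) := by exact_mod_cast Nat.lt_of_lt_of_le one_lt_two hn0_2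
  have hlogn0 : 0 < Real.log n0 := Real.log_pos h1n0
  set c : ℝ := min (min (c2 / 2) (c1 / (4 * k))) (Real.log 2 / Real.log n0) with hc
  have hcpos : 0 < c := by
    apply lt_min
    apply lt_min
    · positivity
    · apply div_pos hc1
      have : (0 : ℝ) < (k : ℝ) := by exact_mod_cast hkpos
      positivity
    · exact div_pos (Real.log_pos one_lt_two) hlogn0
  refine ⟨c, hcpos, ?_⟩
  intro V _ T hT hfree
  set n := Fintype.card V with hn
  by_cases hsmall : n ≤ n0
  · -- small cases
    by_cases hn1 : n ≤ 1
    · by_cases hnz : n = 0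
      · refine ⟨∅, by intro u hu; simp at hu, ?_⟩
        rw [hnz]
        norm_num [Real.zero_rpow (ne_of_gt hcpos)]
      · have hone : n = 1 := by omega
        refine ⟨Finset.univ, ?_, ?_⟩
        · intro x hx y hy w hw hxy _
          have hcard1 : Fintype.card V ≤ 1 := by omega
          have : x = y := Fintype.card_le_one_iff.mp hcard1 x y
          exact absurd (this ▸ hxy) (hT.1 y)
        · rw [hone, Finset.card_univ, ← hn, hone]
          simp [Real.one_rpow]
    · push_neg at hn1
      obtain ⟨a, b, hab⟩ := Fintype.exists_pair_of_one_lt_card hn1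
      refine ⟨{a, b}, pair_transitive hT a b, ?_⟩
      rw [Finset.card_pair hab]
      have hnpos : (0 : ℝ) < (n : ℝ) := by exact_mod_cast Nat.lt_of_lt_of_le Nat.zero_lt_one hn1.le
      have hclog : c ≤ Real.log 2 / Real.log n0 := min_le_right _ _
      have hlogn : Real.log n ≤ Real.log n0 := by
        apply Real.log_le_log hnpos
        exact_mod_cast hsmall
      have hlognn : 0 ≤ Real.log n := Real.log_natCast_nonneg n
      calc (n : ℝ) ^ c = Real.exp (Real.log n * c) := by
            rw [← Real.rpow_def_of_pos hnpos]
        _ ≤ Real.exp (Real.log 2) := by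
            apply Real.exp_le_exp.mpr
            calc Real.log n * c ≤ Real.log n0 * (Real.log 2 / Real.log n0) := by
                  apply mul_le_mul hlogn hclog (le_of_lt hcpos) (le_of_lt hlogn0)
              _ = Real.log 2 := by field_simp
        _ = 2 := Real.exp_log two_pos
  · -- main case : n > n0
    push_neg at hsmall
    have hn2k : 2 * k ≤ n := by omega
    have hnA : A ^ (4 * k) ≤ n := by omega
    have hn1 : 1 ≤ n := by omega
    have hrn0 : (0 : ℝ) < (n : ℝ) := by exact_mod_cast hn1
    have hrn1 : (1 : ℝ) ≤ (n : ℝ) := by exact_mod_cast hn1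
    set α : ℝ := (n : ℝ) ^ (((4 * k : ℕ) : ℝ))⁻¹ with hα
    have hα0 : 0 ≤ α := Real.rpow_nonneg (le_of_lt hrn0) _
    have h4k0 : ((4 * k : ℕ) : ℝ) ≠ 0 := by
      have : (0 : ℕ) < 4 * k := by omega
      exact_mod_cast Nat.pos_iff_ne_zero.mp this
    have hαpow : α ^ (4 * k) = (n : ℝ) := by
      rw [hα, ← Real.rpow_natCast ((n : ℝ) ^ (((4 * k : ℕ) : ℝ))⁻¹) (4 * k),
        ← Real.rpow_mul (le_of_lt hrn0), inv_mul_cancel₀ h4k0, Real.rpow_one]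
    have hαA : (A : ℝ) ≤ α := by
      apply le_of_pow_le_pow_left₀ (by omega : 4 * k ≠ 0) hα0
      rw [hαpow]
      exact_mod_cast hnA
    have hα1 : (1 : ℝ) ≤ α := le_trans (by exact_mod_cast hA2.trans (le_refl A) |>.trans' one_le_two) hαA
    have hα2D : (2 * D : ℝ) ≤ α := by
      refine le_trans ?_ hαA
      have : 2 * D ≤ A := by
        calc 2 * D = 2 * D * 1 := by ring
          _ ≤ 2 * D * (k + 1) := Nat.mul_le_mul_left _ (by omega)
      exact_mod_cast this
    have hDpos : (0 : ℝ) < (D : ℝ) := by exact_mod_cast hD1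
    -- γ = α^(2k) = √n
    set γ : ℝ := α ^ (2 * k) with hγ
    have hγ0 : 0 ≤ γ := pow_nonneg hα0 _
    have hγsq : γ ^ 2 = (n : ℝ) := by
      rw [hγ, ← pow_mul, show 2 * k * 2 = 4 * k by ring, hαpow]
    set s : ℕ := Nat.sqrt n with hs
    set t : ℕ := s + 1 with ht
    have hs_le : (s : ℝ) ≤ γ := by
      apply le_of_pow_le_pow_left₀ (two_ne_zero) hγ0
      rw [hγsq]
      exact_mod_cast Nat.sqrt_le' n
    have ht_ge : γ ≤ (t : ℝ) := by
      apply le_of_lt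
      apply lt_of_pow_lt_pow_left₀ 2 (by positivity)
      rw [hγsq]
      exact_mod_cast Nat.lt_succ_sqrt' n
    set m : ℕ := ⌊α ^ 2 / (D : ℝ)⌋₊ with hm
    have hm_le : (m : ℝ) ≤ α ^ 2 / D := Nat.floor_le (by positivity)
    have hm_gt : α ^ 2 / D - 1 < (m : ℝ) := Nat.sub_one_lt_floor _
    have hα2D' : α + 1 ≤ α ^ 2 / D := by
      rw [le_div_iff₀ hDpos]
      nlinarith
    have hm_lower : α ≤ (m : ℝ) := by nlinarith
    have hrA : (A : ℝ) = 2 * (D : ℝ) * ((k : ℝ) + 1) := by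
      rw [hA]; push_cast; ring
    have hrk2 : (2 : ℝ) ≤ (k : ℝ) := by exact_mod_cast hk2
    have hrD1 : (1 : ℝ) ≤ (D : ℝ) := by exact_mod_cast hD1
    have hm_ge_k : k ≤ m := by
      rw [hm, Nat.le_floor_iff (by positivity)]
      rw [le_div_iff₀ hDpos]
      have hAα : (A : ℝ) * A ≤ α ^ 2 := by nlinarith
      have : (k : ℝ) * D ≤ (A : ℝ) * A := by nlinarith
      linarith
    have hm_n : m ≤ n := by
      have h1 : (m : ℝ) ≤ α ^ 2 := le_trans hm_le (by
        rw [div_le_iff₀ hDpos]; nlinarith)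
      have h2 : α ^ 2 ≤ α ^ (4 * k) := pow_le_pow_right₀ hα1 (by omega)
      have : (m : ℝ) ≤ (n : ℝ) := by rw [← hαpow]; linarith
      exact_mod_cast this
    -- copies of H1 and extension sets
    set C : Finset (W1 → V) := Finset.univ.filter
      (fun f => Function.Injective f ∧ ∀ a b, H1 a b → T (f a) (f b)) with hC
    set F : ({u : W1 // u ≠ v} → V) → V → (W1 → V) :=
      (fun g x u => if h : u = v then x else g ⟨u, h⟩) with hF
    set Xg : ({u : W1 // u ≠ v} → V) → Finset V :=
      (fun g => Finset.univ.filter (fun x => F g x ∈ C)) with hXg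
    have hFa : ∀ g x (a : {u : W1 // u ≠ v}), F g x a.1 = g a := by
      intro g x a
      simp only [hF]
      rw [dif_neg a.2]
    have hFv : ∀ g x, F g x v = x := by
      intro g x; simp [hF]
    have hCmem : ∀ f, f ∈ C ↔ (Function.Injective f ∧ ∀ a b, H1 a b → T (f a) (f b)) := by
      intro f; rw [hC]; simp
    have hXmem : ∀ g x, x ∈ Xg g ↔ F g x ∈ C := by
      intro g x; rw [hXg]; simp
    by_cases hcaseA : ∃ g, t ≤ (Xg g).card
    · -- Case A : some extension set is large; it is H2-free
      obtain ⟨g, hgt⟩ := hcaseA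
      obtain ⟨x0, hx0⟩ := Finset.card_pos.mp (lt_of_lt_of_le (by omega) hgt)
      have hprop : ∀ x ∈ Xg g, Function.Injective (F g x) ∧
          ∀ a b, H1 a b → T (F g x a) (F g x b) := by
        intro x hx
        exact (hCmem _).mp ((hXmem g x).mp hx)
      have hH2free : ¬ Embeds H2 (fun a b : {x // x ∈ Xg g} => T a.1 b.1) := by
        rintro ⟨h, hinj, hedge⟩
        apply hfree
        refine ⟨Sum.elim (fun a => g a) (fun w => (h w).1), ?_, ?_⟩
        · rintro (a | w) (b | w') hab
          · have hinj0 := (hprop x0 hx0).1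
            have heq : F g x0 a.1 = F g x0 b.1 := by rw [hFa, hFa]; exact hab
            exact congrArg Sum.inl (Subtype.ext (hinj0 heq))
          · have hinj1 := (hprop _ (h w').2).1
            have heq : F g ((h w').1) a.1 = F g ((h w').1) v := by
              rw [hFa, hFv]; exact hab
            exact absurd (hinj1 heq) a.2
          · have hinj1 := (hprop _ (h w).2).1
            have heq : F g ((h w).1) v = F g ((h w).1) b.1 := by
              rw [hFa, hFv]; exact hab
            exact absurd (hinj1 heq).symm b.2
          · exact congrArg Sum.inr (hinj (Subtype.ext hab))
        · rintro (a | w) (b | w') hH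
          · have hedge0 := (hprop x0 hx0).2
            have hthis := hedge0 a.1 b.1 hH
            rwa [hFa, hFa] at hthis
          · have hedge1 := (hprop _ (h w').2).2
            have hthis := hedge1 a.1 v hH
            rwa [hFa, hFv] at hthis
          · have hedge1 := (hprop _ (h w).2).2
            have hthis := hedge1 v b.1 hH
            rwa [hFv, hFa] at hthis
          · exact hedge w w' hH
      obtain ⟨S, hS, hcard⟩ := ehwith_restrict hE2 hT (Xg g) hH2free
      refine ⟨S, hS, le_trans ?_ hcard⟩
      have hXcard : γ ≤ (((Xg g).card : ℕ) : ℝ) := le_trans ht_ge (by exact_mod_cast hgt)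
      have e1 : (n : ℝ) ^ c ≤ (n : ℝ) ^ (c2 / 2) :=
        Real.rpow_le_rpow_of_exponent_le hrn1 (le_trans (min_le_left _ _) (min_le_left _ _))
      have e2 : (n : ℝ) ^ (c2 / 2) = γ ^ c2 := by
        rw [← hγsq, ← Real.rpow_natCast γ 2, ← Real.rpow_mul hγ0]
        norm_num
        ring_nf
      have e3 : γ ^ c2 ≤ (((Xg g).card : ℕ) : ℝ) ^ c2 :=
        Real.rpow_le_rpow hγ0 hXcard (le_of_lt hc2)
      calc (n : ℝ) ^ c ≤ _ := e1
        _ = _ := e2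
        _ ≤ _ := e3
    · -- Case B : all extension sets are small
      push_neg at hcaseA
      have hXs : ∀ g, (Xg g).card ≤ s := fun g => by have := hcaseA g; omega
      have hCinj : ∀ f ∈ C, Function.Injective f := fun f hf => ((hCmem f).mp hf).1
      have hCcard : C.card ≤ n ^ e * s := by
        have hmap : C.card ≤ ((Finset.univ : Finset ({u : W1 // u ≠ v} → V)).sigma
            (fun g => Xg g)).card := by
          apply Finset.card_le_card_of_injOn
            (fun f => ⟨fun a => f a.1, f v⟩ : (W1 → V) → Σ _g : {u : W1 // u ≠ v} → V, V)
          · intro f hf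
            have hFf : F (fun a => f a.1) (f v) = f := by
              funext u
              simp only [hF]
              split
              · next h => rw [h]
              · rfl
            rw [Finset.mem_coe, Finset.mem_sigma]
            refine ⟨Finset.mem_univ _, ?_⟩
            rw [hXmem, hFf]
            exact hf
          · intro f _ f' _ heq
            have h1 : (fun a : {u : W1 // u ≠ v} => f a.1) = (fun a => f' a.1) :=
              congrArg Sigma.fst heq
            have h2 : f v = f' v := eq_of_heq (Sigma.mk.inj_iff.mp heq).2
            funext u
            by_cases hu : u = v
            · rw [hu]; exact h2
            · exact congrFun h1 ⟨u, hu⟩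
        have hsig : ((Finset.univ : Finset ({u : W1 // u ≠ v} → V)).sigma
            (fun g => Xg g)).card ≤ n ^ e * s := by
          rw [Finset.card_sigma]
          calc ∑ g ∈ (Finset.univ : Finset ({u : W1 // u ≠ v} → V)), (Xg g).card
              ≤ ∑ _g ∈ (Finset.univ : Finset ({u : W1 // u ≠ v} → V)), s :=
                Finset.sum_le_sum (fun g _ => hXs g)
            _ = Fintype.card ({u : W1 // u ≠ v} → V) * s := by
                rw [Finset.sum_const, smul_eq_mul, Finset.card_univ]
            _ = n ^ e * s := by rw [Fintype.card_fun, ← hn, ← he]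
        exact le_trans hmap hsig
      -- the key counting inequality
      have hfact1 : (1 : ℝ) ≤ (k.factorial : ℝ) := by
        exact_mod_cast Nat.one_le_iff_ne_zero.mpr (Nat.factorial_ne_zero k)
      have hDD : ((2 : ℝ) ^ k * k.factorial) < ((D : ℝ)) ^ k := by
        have hD2 : 1 < D := by
          have h1 : 2 ≤ k.factorial := by
            calc 2 = Nat.factorial 2 := rfl
              _ ≤ k.factorial := Nat.factorial_le hk2
          have h2 : 1 ≤ 2 ^ k := Nat.one_le_two_pow
          calc 1 < 2 * 1 := by norm_num
            _ ≤ k.factorial * 2 ^ k := Nat.mul_le_mul h1 h2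
        have hDk : D < D ^ k := by
          calc D = D ^ 1 := (pow_one D).symm
            _ < D ^ k := Nat.pow_lt_pow_right hD2 (by omega)
        calc (2 : ℝ) ^ k * k.factorial = ((D : ℕ) : ℝ) := by rw [hD]; push_cast; ring
          _ < ((D : ℝ)) ^ k := by exact_mod_cast hDk
      have hmid : (n ^ e * s) * m ^ k * k.factorial < (n + 1 - k) ^ k := by
        have hcast : ((n + 1 - k : ℕ) : ℝ) = (n : ℝ) + 1 - (k : ℝ) := by
          have hkn : k ≤ n + 1 := by omega
          push_cast [hkn]; ring
        have h2kr : (2 * (k : ℝ)) ≤ (n : ℝ) := by exact_mod_cast hn2k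
        rw [← Nat.cast_lt (α := ℝ)]
        have hgoal1 : ((n:ℝ) ^ e * s) * (m:ℝ) ^ k * (k.factorial : ℝ)
            ≤ ((n:ℝ) ^ e * γ) * (γ / (D:ℝ) ^ k) * (k.factorial : ℝ) := by
          have hdp : (α ^ 2 / (D:ℝ)) ^ k = γ / (D : ℝ) ^ k := by
            rw [div_pow, ← pow_mul, hγ]
          have hmk : (m : ℝ) ^ k ≤ γ / (D:ℝ) ^ k := by
            rw [← hdp]
            exact pow_le_pow_left₀ (by positivity) hm_le k
          have h1 : ((n : ℝ) ^ e * s) ≤ (n : ℝ) ^ e * γ :=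
            mul_le_mul_of_nonneg_left hs_le (by positivity)
          apply mul_le_mul_of_nonneg_right _ (by positivity)
          apply mul_le_mul h1 hmk (by positivity) (by positivity)
        have hgg : (n : ℝ) ^ e * γ * (γ / (D:ℝ) ^ k) * (k.factorial : ℝ)
            = (n : ℝ) ^ k * ((2:ℝ) ^ k * k.factorial) / ((2:ℝ) ^ k * (D:ℝ) ^ k) := by
          have hγγ : γ * γ = (n : ℝ) := by rw [← hγsq]; ring
          have hnk : (n : ℝ) ^ k = (n : ℝ) ^ e * (n : ℝ) := by rw [← hek, pow_succ]
          rw [hnk, ← hγγ]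
          have hDk : ((D:ℝ)) ^ k ≠ 0 := by positivity
          field_simp
        calc (((n ^ e * s) * m ^ k * k.factorial : ℕ) : ℝ)
            = ((n:ℝ) ^ e * s) * (m:ℝ) ^ k * (k.factorial : ℝ) := by push_cast; ring
          _ ≤ ((n:ℝ) ^ e * γ) * (γ / (D:ℝ) ^ k) * (k.factorial : ℝ) := hgoal1
          _ = (n : ℝ) ^ k * ((2:ℝ) ^ k * k.factorial) / ((2:ℝ) ^ k * (D:ℝ) ^ k) := hgg
          _ < (n : ℝ) ^ k * ((D:ℝ) ^ k) / ((2:ℝ) ^ k * (D:ℝ) ^ k) := by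
              have hden : (0:ℝ) < (2:ℝ) ^ k * (D:ℝ) ^ k := by positivity
              have hnum : (n : ℝ) ^ k * ((2:ℝ) ^ k * k.factorial)
                  < (n : ℝ) ^ k * ((D:ℝ) ^ k) :=
                mul_lt_mul_of_pos_left hDD (pow_pos hrn0 k)
              exact (div_lt_div_iff_of_pos_right hden).mpr hnum
          _ = ((n:ℝ) / 2) ^ k := by
              rw [div_pow]
              have h2k : ((2:ℝ)) ^ k ≠ 0 := by positivity
              have hDk : ((D:ℝ)) ^ k ≠ 0 := by positivity
              field_simp
          _ ≤ ((n:ℝ) + 1 - (k:ℝ)) ^ k := pow_le_pow_left₀ (by positivity) (by linarith) k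
          _ = (((n + 1 - k) ^ k : ℕ) : ℝ) := by rw [Nat.cast_pow, hcast]
      have hchoose : C.card * m.choose k < n.choose k := by
        have upper : C.card * m.choose k * k.factorial ≤ (n ^ e * s) * m ^ k * k.factorial :=
          Nat.mul_le_mul (Nat.mul_le_mul hCcard (Nat.choose_le_pow m k)) le_rfl
        have lower : (n + 1 - k) ^ k ≤ n.choose k * k.factorial := by
          have h := Nat.pow_sub_le_descFactorial n k
          rw [Nat.descFactorial_eq_factorial_mul_choose, Nat.mul_comm] at h
          exact h
        exact Nat.lt_of_mul_lt_mul_right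
          (lt_of_le_of_lt upper (lt_of_lt_of_le hmid lower))
      obtain ⟨U, hUcard, hUgood⟩ := exists_free_subset C hCinj m hm_ge_k hm_n hchoose
      have hH1free : ¬ Embeds H1 (fun a b : {x // x ∈ U} => T a.1 b.1) := by
        rintro ⟨f, hfi, hfe⟩
        refine hUgood (fun u => (f u).1) ?_ (fun w => (f w).2)
        rw [hCmem]
        exact ⟨Subtype.val_injective.comp hfi, fun a b hab => hfe a b hab⟩
      obtain ⟨S, hS, hcard⟩ := ehwith_restrict hE1 hT U hH1free
      rw [hUcard] at hcard
      refine ⟨S, hS, le_trans ?_ hcard⟩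
      have e1 : (n : ℝ) ^ c ≤ (n : ℝ) ^ (c1 / (4 * (k:ℝ))) :=
        Real.rpow_le_rpow_of_exponent_le hrn1 (le_trans (min_le_left _ _) (min_le_right _ _))
      have e2 : (n : ℝ) ^ (c1 / (4 * (k:ℝ))) = α ^ c1 := by
        have hx : c1 / (4 * (k:ℝ)) = (((4 * k : ℕ) : ℝ))⁻¹ * c1 := by push_cast; ring
        rw [hx, Real.rpow_mul (le_of_lt hrn0)]
      have e3 : α ^ c1 ≤ (m : ℝ) ^ c1 := Real.rpow_le_rpow hα0 hm_lower (le_of_lt hc1)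
      calc (n : ℝ) ^ c ≤ _ := e1
        _ = _ := e2
        _ ≤ _ := e3
end
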